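/- arXiv:math/0605119 — 4 statements merged into one kernel-verified Lean document; each statement's English description precedes it below -/
import Mathlib

section
/- Let I be a monomial ideal in S = K[x_1,…,x_n] and let S/I = ⊕_{i=1}^r u_iK[Z_i] be a Stanley decomposition of S/I. Then this Stanley decomposition corresponds to a prime filtration of S/I if and only if the Stanley spaces T_i = u_iK[Z_i] can be ordered T_1,…,T_r so that I_k = I ⊕ T_1 ⊕ ⋯ ⊕ T_k is a monomial ideal for every k = 1,…,r. In that case I = I_0 ⊂ I_1 ⊂ ⋯ ⊂ I_r = S is a prime filtration with I_k = (I_{k−1}, u_k) and I_{k−1} : u_k = (x_i : x_i ∉ Z_k). -/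
open MvPolynomial

/-- The monomial `x^a` in `K[x_i : i ∈ σ]`. -/
noncomputable def mono (K : Type*) [Field K] {σ : Type*} (a : σ →₀ ℕ) :
    MvPolynomial σ K :=
  MvPolynomial.monomial a 1

/-- An ideal is a monomial ideal if it is generated by monomials. -/
def IsMonomialIdeal {K : Type*} [Field K] {σ : Type*}
    (I : Ideal (MvPolynomial σ K)) : Prop :=
  ∃ A : Set (σ →₀ ℕ), I = Ideal.span ((fun a => mono K a) '' A)

/-- `IsPrimeFiltration I c u` says that `c` is a chain of (monomial) ideals
`I = I₀ ⊆ I₁ ⊆ ⋯ ⊆ I_r = S` with `I_j = I_{j-1} + (x^{u j})` and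
`I_{j-1} : x^{u j}` a prime ideal, i.e. `I_j/I_{j-1} ≅ S/P_j`. -/
def IsPrimeFiltration {K : Type*} [Field K] {σ : Type*}
    (I : Ideal (MvPolynomial σ K)) {r : ℕ}
    (c : Fin (r + 1) → Ideal (MvPolynomial σ K)) (u : Fin r → (σ →₀ ℕ)) : Prop :=
  c 0 = I ∧ c (Fin.last r) = ⊤ ∧
    (∀ j : Fin r, c j.succ = c j.castSucc ⊔ Ideal.span {mono K (u j)}) ∧
    (∀ j : Fin r, ((c j.castSucc).colon (Ideal.span {mono K (u j)})).IsPrime)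

/-- The `j`-th prime factor `P_j = I_{j-1} : u_j` of a prime filtration. -/
noncomputable def filtFactor {K : Type*} [Field K] {σ : Type*} {r : ℕ}
    (c : Fin (r + 1) → Ideal (MvPolynomial σ K)) (u : Fin r → (σ →₀ ℕ)) (j : Fin r) :
    Ideal (MvPolynomial σ K) :=
  (c j.castSucc).colon (Ideal.span {mono K (u j)})

/-- A prime filtration is pretty clean if `i < j` and `P_i ⊆ P_j` imply `P_i = P_j`. -/
def IsPrettyCleanFiltration {K : Type*} [Field K] {σ : Type*}
    (I : Ideal (MvPolynomial σ K)) {r : ℕ}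
    (c : Fin (r + 1) → Ideal (MvPolynomial σ K)) (u : Fin r → (σ →₀ ℕ)) : Prop :=
  IsPrimeFiltration I c u ∧
    ∀ i j : Fin r, i < j → filtFactor c u i ≤ filtFactor c u j →
      filtFactor c u i = filtFactor c u j

/-- A monomial ideal is pretty clean if it admits a pretty clean filtration. -/
def IsPrettyClean {K : Type*} [Field K] {σ : Type*}
    (I : Ideal (MvPolynomial σ K)) : Prop :=
  ∃ (r : ℕ) (c : Fin (r + 1) → Ideal (MvPolynomial σ K)) (u : Fin r → (σ →₀ ℕ)),
    IsPrettyCleanFiltration I c u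

/-- A prime filtration is clean if its support is the set of minimal primes of `I`. -/
def IsCleanFiltration {K : Type*} [Field K] {σ : Type*}
    (I : Ideal (MvPolynomial σ K)) {r : ℕ}
    (c : Fin (r + 1) → Ideal (MvPolynomial σ K)) (u : Fin r → (σ →₀ ℕ)) : Prop :=
  IsPrimeFiltration I c u ∧
    {P | ∃ j : Fin r, filtFactor c u j = P} = I.minimalPrimes

/-- A monomial ideal is clean if it admits a clean filtration. -/
def IsClean {K : Type*} [Field K] {σ : Type*}
    (I : Ideal (MvPolynomial σ K)) : Prop :=
  ∃ (r : ℕ) (c : Fin (r + 1) → Ideal (MvPolynomial σ K)) (u : Fin r → (σ →₀ ℕ)),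
    IsCleanFiltration I c u


/-- The family of residue classes of the monomials `x^{u i}·x^v`, `supp v ⊆ Z i`,
of a candidate Stanley decomposition `S/I = ⊕ᵢ x^{u i} K[Z i]`. -/
noncomputable def stanleyFamily {K : Type*} [Field K] {n : ℕ}
    (I : Ideal (MvPolynomial (Fin n) K)) {r : ℕ}
    (u : Fin r → (Fin n →₀ ℕ)) (Z : Fin r → Finset (Fin n)) :
    (Σ i : Fin r, {v : Fin n →₀ ℕ // v.support ⊆ Z i}) →
      (MvPolynomial (Fin n) K ⧸ I) :=
  fun p => Ideal.Quotient.mk I (mono K (u p.1 + p.2.1))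

/-- `S/I = ⊕ᵢ x^{u i} K[Z i]` is a Stanley decomposition: the residue classes of
the monomials `x^{u i}·x^v` (`supp v ⊆ Z i`) form a `K`-basis of `S/I`. -/
def IsStanleyDecomposition {K : Type*} [Field K] {n : ℕ}
    (I : Ideal (MvPolynomial (Fin n) K)) {r : ℕ}
    (u : Fin r → (Fin n →₀ ℕ)) (Z : Fin r → Finset (Fin n)) : Prop :=
  LinearIndependent K (stanleyFamily I u Z) ∧
    Submodule.span K (Set.range (stanleyFamily I u Z)) = ⊤

/-- The Stanley space `x^a·K[Z]` viewed as a `K`-subspace of `S`: the `K`-span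
of the monomials `x^a·x^v` with `supp v ⊆ Z`. -/
noncomputable def stanleySubspace (K : Type*) [Field K] {n : ℕ}
    (a : Fin n →₀ ℕ) (Z : Finset (Fin n)) :
    Submodule K (MvPolynomial (Fin n) K) :=
  Submodule.span K ((fun v => mono K (a + v)) '' {v : Fin n →₀ ℕ | v.support ⊆ Z})

/-- The partial sum `I ⊕ T_{ord 0} ⊕ ⋯ ⊕ T_{ord k}` of Stanley spaces (in the
order given by `ord`) as a `K`-subspace of `S`. -/
noncomputable def stanleyPartialSum {K : Type*} [Field K] {n : ℕ}
    (I : Ideal (MvPolynomial (Fin n) K)) {r : ℕ}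
    (u : Fin r → (Fin n →₀ ℕ)) (Z : Fin r → Finset (Fin n))
    (ord : Equiv.Perm (Fin r)) (k : Fin r) :
    Submodule K (MvPolynomial (Fin n) K) :=
  Submodule.restrictScalars K I ⊔
    ⨆ i : Fin r, ⨆ _ : i ≤ k, stanleySubspace K (u (ord i)) (Z (ord i))


section Aux
variable {K : Type*} [Field K] {σ : Type*}

lemma mono_mul (a b : σ →₀ ℕ) : mono K a * mono K b = mono K (a + b) := by
  simp [mono, monomial_mul]

lemma isMonomialIdeal_sup {I J : Ideal (MvPolynomial σ K)}
    (hI : IsMonomialIdeal I) (hJ : IsMonomialIdeal J) : IsMonomialIdeal (I ⊔ J) := by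
  obtain ⟨A, rfl⟩ := hI; obtain ⟨B, rfl⟩ := hJ
  exact ⟨A ∪ B, by rw [Set.image_union, Ideal.span_union]⟩

lemma isMonomialIdeal_span_singleton (a : σ →₀ ℕ) :
    IsMonomialIdeal (Ideal.span {mono K a}) :=
  ⟨{a}, by rw [Set.image_singleton]⟩

lemma IsMonomialIdeal.mono_mem {J : Ideal (MvPolynomial σ K)} (hJ : IsMonomialIdeal J)
    {f : MvPolynomial σ K} (hf : f ∈ J) {m : σ →₀ ℕ} (hm : m ∈ f.support) :
    mono K m ∈ J := by
  classical
  obtain ⟨A, rfl⟩ := hJ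
  have h1 : ∀ xi ∈ f.support, ∃ si ∈ A, si ≤ xi :=
    mem_ideal_span_monomial_image.mp hf
  refine mem_ideal_span_monomial_image.mpr ?_
  intro xi hxi
  rw [mono, support_monomial, if_neg one_ne_zero, Finset.mem_singleton] at hxi
  exact hxi ▸ h1 m hm

lemma coeff_eq_zero_of_mem_span {E : Set (σ →₀ ℕ)} {g : MvPolynomial σ K}
    (hg : g ∈ Submodule.span K ((fun a => mono K a) '' E)) {m : σ →₀ ℕ} (hm : m ∉ E) :
    coeff m g = 0 := by
  classical
  have : Submodule.span K ((fun a => mono K a) '' E) ≤ LinearMap.ker (lcoeff K m) := by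
    rw [Submodule.span_le]
    rintro _ ⟨e, he, rfl⟩
    simp only [SetLike.mem_coe, LinearMap.mem_ker, lcoeff_apply, mono, coeff_monomial]
    rw [if_neg]
    intro h; exact hm (h ▸ he)
  exact this hg

lemma restrictScalars_sup' (A B : Ideal (MvPolynomial σ K)) :
    Submodule.restrictScalars K (A ⊔ B) =
      Submodule.restrictScalars K A ⊔ Submodule.restrictScalars K B := by
  ext x
  simp only [Submodule.restrictScalars_mem, Submodule.mem_sup]

lemma span_X_eq_ker (W : Finset σ) [DecidableEq σ] :
    Ideal.span ((fun i => (X i : MvPolynomial σ K)) '' {i | i ∉ W}) =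
      RingHom.ker (aeval (R := K)
        (fun i => if i ∈ W then (X i : MvPolynomial σ K) else 0)).toRingHom := by
  set ψ : MvPolynomial σ K →ₐ[K] MvPolynomial σ K :=
    aeval (fun i => if i ∈ W then (X i : MvPolynomial σ K) else 0) with hψ
  have hmono : ∀ (m : σ →₀ ℕ) (c : K),
      ψ (monomial m c) = if m.support ⊆ W then monomial m c else 0 := by
    intro m c
    rw [hψ, aeval_monomial]
    split_ifs with h
    · rw [monomial_eq]
      congr 1
      refine Finsupp.prod_congr fun i hi => ?_
      rw [if_pos (h hi)]
    · obtain ⟨i, hi, hiW⟩ := Finset.not_subset.mp h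
      have hi' : i ∈ m.support := hi
      rw [Finsupp.prod, Finset.prod_eq_zero hi'
        (by rw [if_neg hiW, zero_pow (Finsupp.mem_support_iff.mp hi')]), mul_zero]
  apply le_antisymm
  · rw [Ideal.span_le]
    rintro _ ⟨i, hi, rfl⟩
    simp only [SetLike.mem_coe, RingHom.mem_ker, AlgHom.toRingHom_eq_coe, RingHom.coe_coe]
    rw [hψ, aeval_X, if_neg hi]
  · intro f hf
    simp only [RingHom.mem_ker, AlgHom.toRingHom_eq_coe, RingHom.coe_coe] at hf
    rw [mem_ideal_span_X_image]
    intro m hm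
    by_contra hcon
    push_neg at hcon
    have hsub : m.support ⊆ W := by
      intro i hi
      by_contra hiW
      exact Finsupp.mem_support_iff.mp hi (hcon i hiW)
    have hcoeff : coeff m (ψ f) = coeff m f := by
      conv_lhs => rw [f.as_sum, map_sum]
      rw [Finset.sum_congr rfl (fun m' _ => hmono m' (coeff m' f)), coeff_sum]
      rw [Finset.sum_eq_single m]
      · rw [if_pos hsub, coeff_monomial, if_pos rfl]
      · intro m' _ hne
        split_ifs with h'
        · rw [coeff_monomial, if_neg hne]
        · exact coeff_zero m
      · intro h; exact absurd hm h
    rw [hf, coeff_zero] at hcoeff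
    exact Finsupp.mem_support_iff.mp hm hcoeff.symm

lemma isPrime_span_X_compl (W : Finset σ) [DecidableEq σ] :
    (Ideal.span ((fun i => (X i : MvPolynomial σ K)) '' {i | i ∉ W})).IsPrime := by
  rw [span_X_eq_ker (K := K) W]
  exact RingHom.ker_isPrime _
end Aux

/-- A Stanley decomposition `S/I = ⊕ᵢ uᵢK[Zᵢ]` corresponds to
a prime filtration of `S/I` (i.e., after reordering by `ord`, there is a prime
filtration `I = I₀ ⊂ ⋯ ⊂ I_r = S` with `I_k = (I_{k-1}, u_{ord k})`,
`I_{k-1} : u_{ord k} = (x_i : x_i ∉ Z_{ord k})`, and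
`I_k = I ⊕ T_{ord 1} ⊕ ⋯ ⊕ T_{ord k}`) if and only if the Stanley spaces can be
ordered so that every partial sum `I ⊕ T_1 ⊕ ⋯ ⊕ T_k` is a monomial ideal. -/


theorem stanley_decomposition_corresponds_to_prime_filtration_iff
    {K : Type*} [Field K] {n : ℕ} (I : Ideal (MvPolynomial (Fin n) K))
    (hI : IsMonomialIdeal I) {r : ℕ}
    (u : Fin r → (Fin n →₀ ℕ)) (Z : Fin r → Finset (Fin n))
    (hD : IsStanleyDecomposition I u Z) :
    (∃ (ord : Equiv.Perm (Fin r)) (c : Fin (r + 1) → Ideal (MvPolynomial (Fin n) K)),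
        IsPrimeFiltration I c (fun k => u (ord k)) ∧
        (∀ k : Fin r, filtFactor c (fun k => u (ord k)) k =
          Ideal.span ((fun i => (X i : MvPolynomial (Fin n) K)) ''
            {i : Fin n | i ∉ Z (ord k)})) ∧
        (∀ k : Fin r, Submodule.restrictScalars K (c k.succ) =
          stanleyPartialSum I u Z ord k)) ↔
      (∃ ord : Equiv.Perm (Fin r), ∀ k : Fin r,
        ∃ J : Ideal (MvPolynomial (Fin n) K), IsMonomialIdeal J ∧
          stanleyPartialSum I u Z ord k = Submodule.restrictScalars K J) := by
    classical
  constructor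
  · rintro ⟨ord, c, hfilt, hcolon, hpart⟩
    refine ⟨ord, fun k => ⟨c k.succ, ?_, (hpart k).symm⟩⟩
    have hmon : ∀ j : Fin (r + 1), IsMonomialIdeal (c j) := by
      intro j
      induction j using Fin.induction with
      | zero => rw [hfilt.1]; exact hI
      | succ i ih =>
        rw [hfilt.2.2.1 i]
        exact isMonomialIdeal_sup ih (isMonomialIdeal_span_singleton _)
    exact hmon k.succ
  · rintro ⟨ord, hord⟩
    choose J hJmon hJ using hord
    set c : Fin (r + 1) → Ideal (MvPolynomial (Fin n) K) := Fin.cases I J with hcdef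
    have hc0 : c 0 = I := rfl
    have hcs : ∀ k : Fin r, c k.succ = J k := fun k => by simp [hcdef]
    set mkl : MvPolynomial (Fin n) K →ₗ[K] (MvPolynomial (Fin n) K ⧸ I) :=
      (Ideal.Quotient.mkₐ K I).toLinearMap with hmkldef
    have hmkl : ∀ x, mkl x = Ideal.Quotient.mk I x := fun _ => rfl
    have hfam : ∀ p, stanleyFamily I u Z p = mkl (mono K (u p.1 + p.2.1)) :=
      fun _ => rfl
    -- basic membership facts
    have hTmem : ∀ (k : Fin r) (v : Fin n →₀ ℕ), v.support ⊆ Z (ord k) →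
        mono K (u (ord k) + v) ∈ stanleySubspace K (u (ord k)) (Z (ord k)) := by
      intro k v hv
      exact Submodule.subset_span ⟨v, hv, rfl⟩
    have hwk : ∀ k : Fin r, mono K (u (ord k)) ∈ J k := by
      intro k
      have h0 : mono K (u (ord k)) ∈ stanleySubspace K (u (ord k)) (Z (ord k)) := by
        have := hTmem k 0 (by simp)
        simpa using this
      have : mono K (u (ord k)) ∈ stanleyPartialSum I u Z ord k := by
        rw [stanleyPartialSum]
        refine Submodule.mem_sup_right ?_
        have hle : stanleySubspace K (u (ord k)) (Z (ord k)) ≤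
            ⨆ i : Fin r, ⨆ _ : i ≤ k, stanleySubspace K (u (ord i)) (Z (ord i)) :=
          le_iSup_of_le k (le_iSup
            (fun _ : k ≤ k => stanleySubspace K (u (ord k)) (Z (ord k))) le_rfl)
        exact hle h0
      rw [hJ k] at this
      exact this
    -- partial sum recurrence
    have hPSrec : ∀ k : Fin r, stanleyPartialSum I u Z ord k =
        Submodule.restrictScalars K (c k.castSucc) ⊔
          stanleySubspace K (u (ord k)) (Z (ord k)) := by
      intro k
      obtain ⟨kv, hk⟩ := k
      rcases kv with _ | t
      · have hcc : c (Fin.castSucc ⟨0, hk⟩) = I := rfl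
        have hsplit : (⨆ i : Fin r, ⨆ _ : i ≤ ⟨0, hk⟩,
            stanleySubspace K (u (ord i)) (Z (ord i))) =
            stanleySubspace K (u (ord ⟨0, hk⟩)) (Z (ord ⟨0, hk⟩)) := by
          apply le_antisymm
          · refine iSup_le fun i => iSup_le fun hi => ?_
            have : i = ⟨0, hk⟩ := Fin.ext (Nat.le_zero.mp hi)
            rw [this]
          · exact le_iSup_of_le ⟨0, hk⟩ (le_iSup (fun _ => _) le_rfl)
        rw [stanleyPartialSum, hsplit, hcc]
      · have ht : t < r := Nat.lt_of_succ_lt hk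
        have hcc : c (Fin.castSucc ⟨t + 1, hk⟩) = J ⟨t, ht⟩ := by
          have he : Fin.castSucc ⟨t + 1, hk⟩ = Fin.succ ⟨t, ht⟩ := rfl
          rw [he, hcs ⟨t, ht⟩]
        have hsplit : (⨆ i : Fin r, ⨆ _ : i ≤ ⟨t + 1, hk⟩,
            stanleySubspace K (u (ord i)) (Z (ord i))) =
            (⨆ i : Fin r, ⨆ _ : i ≤ ⟨t, ht⟩,
              stanleySubspace K (u (ord i)) (Z (ord i))) ⊔
              stanleySubspace K (u (ord ⟨t + 1, hk⟩)) (Z (ord ⟨t + 1, hk⟩)) := by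
          apply le_antisymm
          · refine iSup_le fun i => iSup_le fun hi => ?_
            rcases Nat.lt_or_ge i.1 (t + 1) with h | h
            · refine le_sup_of_le_left ?_
              exact le_iSup_of_le i (le_iSup (fun _ => _) (Nat.lt_succ_iff.mp h))
            · have : i = ⟨t + 1, hk⟩ := Fin.ext (le_antisymm hi h)
              rw [this]
              exact le_sup_right
          · refine sup_le ?_ ?_
            · refine iSup_le fun i => iSup_le fun hi => ?_
              exact le_iSup_of_le i (le_iSup (fun _ => _)
                (show i ≤ ⟨t + 1, hk⟩ from le_trans hi (by simp [Fin.le_def])))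
            · exact le_iSup_of_le ⟨t + 1, hk⟩ (le_iSup (fun _ => _) le_rfl)
        rw [stanleyPartialSum, hsplit, hcc, ← hJ ⟨t, ht⟩, stanleyPartialSum, sup_assoc]
    have hCmon : ∀ j : Fin (r + 1), IsMonomialIdeal (c j) := by
      intro j
      induction j using Fin.cases with
      | zero => exact hI
      | succ i => rw [hcs i]; exact hJmon i
    have hcastle : ∀ k : Fin r, c k.castSucc ≤ J k := by
      intro k x hx
      have : x ∈ stanleyPartialSum I u Z ord k := by
        rw [hPSrec k]
        exact Submodule.mem_sup_left hx
      rw [hJ k] at this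
      exact this
    -- the key filtration step
    have hsucc : ∀ k : Fin r, c k.succ = c k.castSucc ⊔
        Ideal.span {mono K (u (ord k))} := by
      intro k
      rw [hcs k]
      apply le_antisymm
      · intro x hx
        have hx' : x ∈ stanleyPartialSum I u Z ord k := by rw [hJ k]; exact hx
        rw [hPSrec k] at hx'
        obtain ⟨a, ha, b, hb, rfl⟩ := Submodule.mem_sup.mp hx'
        refine add_mem (Ideal.mem_sup_left ha) (Ideal.mem_sup_right ?_)
        have hTle : stanleySubspace K (u (ord k)) (Z (ord k)) ≤
            Submodule.restrictScalars K (Ideal.span {mono K (u (ord k))}) := by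
          rw [stanleySubspace, Submodule.span_le]
          rintro _ ⟨v, hv, rfl⟩
          simp only [SetLike.mem_coe, Submodule.restrictScalars_mem]
          refine Ideal.mem_span_singleton.mpr ⟨mono K v, ?_⟩
          rw [mono_mul]
        exact hTle hb
      · refine sup_le (hcastle k) ?_
        rw [Ideal.span_le, Set.singleton_subset_iff]
        exact hwk k
    -- the covering fact : every element lies in I + span of all Stanley monomials
    have hcov : ∀ f : MvPolynomial (Fin n) K,
        f ∈ Submodule.restrictScalars K I ⊔ Submodule.span K (Set.range
          (fun p : (Σ i : Fin r, {v : Fin n →₀ ℕ // v.support ⊆ Z i}) =>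
            mono K (u p.1 + p.2.1))) := by
      intro f
      have h1 : Ideal.Quotient.mk I f ∈
          Submodule.span K (Set.range (stanleyFamily I u Z)) := by
        rw [hD.2]; trivial
      have hrange : Set.range (stanleyFamily I u Z) = mkl '' Set.range
          (fun p : (Σ i : Fin r, {v : Fin n →₀ ℕ // v.support ⊆ Z i}) =>
            mono K (u p.1 + p.2.1)) := by
        rw [← Set.range_comp]
        rfl
      rw [hrange, Submodule.span_image] at h1
      obtain ⟨g, hg, hgf⟩ := h1
      have hfg : f - g ∈ I := by
        rw [← Ideal.Quotient.eq_zero_iff_mem, map_sub, ← hmkl g, hgf, sub_self]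
      exact Submodule.mem_sup.mpr ⟨f - g, hfg, g, hg, by ring⟩
    -- monotonicity of the chain
    have hcmono : Monotone c := by
      have step : ∀ k : Fin r, c k.castSucc ≤ c k.succ := by
        intro k
        rw [hsucc k]
        exact le_sup_left
      exact Fin.monotone_iff_le_succ.mpr step
    have hlast : c (Fin.last r) = ⊤ := by
      rw [Submodule.eq_top_iff']
      intro x
      obtain ⟨a, ha, b, hb, rfl⟩ := Submodule.mem_sup.mp (hcov x)
      refine add_mem (hcmono (Fin.zero_le _) ha) ?_
      have hble : Submodule.span K (Set.range
          (fun p : (Σ i : Fin r, {v : Fin n →₀ ℕ // v.support ⊆ Z i}) =>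
            mono K (u p.1 + p.2.1))) ≤ Submodule.restrictScalars K (c (Fin.last r)) := by
        rw [Submodule.span_le]
        rintro _ ⟨⟨i, v, hv⟩, rfl⟩
        simp only [SetLike.mem_coe, Submodule.restrictScalars_mem]
        have h2 : mono K (u i + v) ∈ stanleyPartialSum I u Z ord (ord.symm i) := by
          rw [stanleyPartialSum]
          refine Submodule.mem_sup_right ?_
          have hle : stanleySubspace K (u (ord (ord.symm i))) (Z (ord (ord.symm i))) ≤
              ⨆ j : Fin r, ⨆ _ : j ≤ ord.symm i,
                stanleySubspace K (u (ord j)) (Z (ord j)) :=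
            le_iSup_of_le (ord.symm i) (le_iSup
              (fun _ : ord.symm i ≤ ord.symm i =>
                stanleySubspace K (u (ord (ord.symm i))) (Z (ord (ord.symm i)))) le_rfl)
          refine hle ?_
          rw [Equiv.apply_symm_apply]
          exact Submodule.subset_span ⟨v, hv, rfl⟩
        rw [hJ _] at h2
        rw [← hcs (ord.symm i)] at h2
        exact hcmono (Fin.le_last _) h2
      exact hble hb
    -- the comap bound for linear independence arguments
    have hcomap : ∀ k : Fin r, Submodule.restrictScalars K (c k.castSucc) ≤
        Submodule.comap mkl (Submodule.span K (stanleyFamily I u Z ''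
          {p | ∃ j : Fin r, j < k ∧ p.1 = ord j})) := by
      intro k
      have hIpart : Submodule.restrictScalars K I ≤
          Submodule.comap mkl (Submodule.span K (stanleyFamily I u Z ''
            {p | ∃ j : Fin r, j < k ∧ p.1 = ord j})) := by
        intro x hx
        simp only [Submodule.mem_comap, hmkl]
        rw [Ideal.Quotient.eq_zero_iff_mem.mpr hx]
        exact Submodule.zero_mem _
      obtain ⟨kv, hk⟩ := k
      rcases kv with _ | t
      · exact hIpart
      · have ht : t < r := Nat.lt_of_succ_lt hk
        have hcc : c (Fin.castSucc ⟨t + 1, hk⟩) = J ⟨t, ht⟩ := by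
          have he : Fin.castSucc ⟨t + 1, hk⟩ = Fin.succ ⟨t, ht⟩ := rfl
          rw [he, hcs ⟨t, ht⟩]
        rw [hcc, ← hJ ⟨t, ht⟩, stanleyPartialSum]
        refine sup_le hIpart (iSup_le fun i => iSup_le fun hi => ?_)
        rw [stanleySubspace, Submodule.span_le]
        rintro _ ⟨v, hv, rfl⟩
        simp only [SetLike.mem_coe, Submodule.mem_comap]
        have : mkl (mono K (u (ord i) + v)) = stanleyFamily I u Z ⟨ord i, ⟨v, hv⟩⟩ := rfl
        rw [this]
        refine Submodule.subset_span ⟨⟨ord i, ⟨v, hv⟩⟩, ⟨i, ?_, rfl⟩, rfl⟩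
        exact Fin.lt_def.mpr (Nat.lt_succ_of_le hi)
    -- key: monomials of T_k are not in earlier partial sums
    have hnotin : ∀ (k : Fin r) (m : Fin n →₀ ℕ), m.support ⊆ Z (ord k) →
        mono K (u (ord k) + m) ∉ c k.castSucc := by
      intro k m hsub hmem
      have h1 : mkl (mono K (u (ord k) + m)) ∈ Submodule.span K (stanleyFamily I u Z ''
          {p | ∃ j : Fin r, j < k ∧ p.1 = ord j}) :=
        hcomap k (by simpa using hmem)
      have h2 : stanleyFamily I u Z ⟨ord k, ⟨m, hsub⟩⟩ =
          mkl (mono K (u (ord k) + m)) := rfl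
      have h3 : (⟨ord k, ⟨m, hsub⟩⟩ : Σ i : Fin r, {v : Fin n →₀ ℕ // v.support ⊆ Z i}) ∉
          {p : Σ i : Fin r, {v : Fin n →₀ ℕ // v.support ⊆ Z i} |
            ∃ j : Fin r, j < k ∧ p.1 = ord j} := by
        rintro ⟨j, hjk, hj⟩
        have hjeq : j = k := ord.injective hj.symm
        rw [hjeq] at hjk
        exact lt_irrefl k hjk
      exact hD.1.notMem_span_image h3 (h2 ▸ h1)
    -- colon computation
    have hcolonEq : ∀ k : Fin r, (c k.castSucc).colon (Ideal.span {mono K (u (ord k))}) =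
        Ideal.span ((fun i => (X i : MvPolynomial (Fin n) K)) ''
          {i : Fin n | i ∉ Z (ord k)}) := by
      intro k
      apply le_antisymm
      · -- hard direction: colon ≤ span of variables
        intro f hf
        have hfm : f * mono K (u (ord k)) ∈ c k.castSucc :=
          Ideal.mem_colon_span_singleton.mp hf
        rw [mem_ideal_span_X_image]
        intro m hm
        by_contra hcon
        push_neg at hcon
        have hsub : m.support ⊆ Z (ord k) := by
          intro i hi
          by_contra hiW
          exact Finsupp.mem_support_iff.mp hi (hcon i hiW)
        have hc1 : coeff (m + u (ord k)) (f * mono K (u (ord k))) = coeff m f := by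
          rw [mono, coeff_mul_monomial, mul_one]
        have hc2 : (m + u (ord k)) ∈ (f * mono K (u (ord k))).support := by
          rw [mem_support_iff, hc1]
          exact Finsupp.mem_support_iff.mp hm
        have hc3 : mono K (m + u (ord k)) ∈ c k.castSucc :=
          (hCmon k.castSucc).mono_mem hfm hc2
        rw [add_comm] at hc3
        exact hnotin k m hsub hc3
      · -- easy direction: variables are in the colon
        rw [Ideal.span_le]
        rintro _ ⟨i, hi, rfl⟩
        simp only [SetLike.mem_coe]
        rw [Ideal.mem_colon_span_singleton]
        have hXi : (X i : MvPolynomial (Fin n) K) = mono K (Finsupp.single i 1) := rfl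
        rw [hXi, mono_mul]
        -- show mono (single i 1 + u (ord k)) ∈ c k.castSucc
        have hJk : mono K (Finsupp.single i 1 + u (ord k)) ∈ J k := by
          have := Ideal.mul_mem_left _ (mono K (Finsupp.single i 1)) (hwk k)
          rwa [mono_mul] at this
        have hPS : mono K (Finsupp.single i 1 + u (ord k)) ∈
            stanleyPartialSum I u Z ord k := by rw [hJ k]; exact hJk
        rw [hPSrec k] at hPS
        obtain ⟨a, ha, b, hb, hab⟩ := Submodule.mem_sup.mp hPS
        -- b has zero coefficient at single i 1 + u (ord k)
        have hbc : coeff (Finsupp.single i 1 + u (ord k)) b = 0 := by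
          have hb' : b ∈ Submodule.span K ((fun a => mono K a) ''
              ((fun v => u (ord k) + v) '' {v : Fin n →₀ ℕ | v.support ⊆ Z (ord k)})) := by
            rw [Set.image_image]
            exact hb
          refine coeff_eq_zero_of_mem_span hb' ?_
          rintro ⟨v, hv, hveq⟩
          have : v = Finsupp.single i 1 := by
            have := hveq.trans (add_comm (Finsupp.single i 1) (u (ord k)))
            exact add_left_cancel this
          rw [this] at hv
          have : i ∈ (Finsupp.single i (1 : ℕ)).support := by
            rw [Finsupp.support_single_ne_zero i one_ne_zero]
            exact Finset.mem_singleton_self i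
          exact hi (hv this)
        have hac : coeff (Finsupp.single i 1 + u (ord k)) a = 1 := by
          have : coeff (Finsupp.single i 1 + u (ord k))
              (mono K (Finsupp.single i 1 + u (ord k))) = 1 := by
            rw [mono, coeff_monomial, if_pos rfl]
          rw [← hab] at this
          rwa [coeff_add, hbc, add_zero] at this
        have hasup : (Finsupp.single i 1 + u (ord k)) ∈ a.support := by
          rw [mem_support_iff, hac]
          exact one_ne_zero
        have ha' : a ∈ c k.castSucc := ha
        exact (hCmon k.castSucc).mono_mem ha' hasup
    -- assemble
    refine ⟨ord, c, ⟨hc0, hlast, fun j => hsucc j, fun j => ?_⟩, fun k => hcolonEq k,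
      fun k => by rw [hcs k, hJ k]⟩
    have : (c j.castSucc).colon (Ideal.span {mono K (u (ord j))}) =
        Ideal.span ((fun i => (X i : MvPolynomial (Fin n) K)) ''
          {i : Fin n | i ∉ Z (ord j)}) := hcolonEq j
    rw [this]
    exact isPrime_span_X_compl _
end

section
/- Let I be a monomial ideal in S = K[x,y]. Then every Stanley decomposition of S/I corresponds to a prime filtration of S/I; that is, for any Stanley decomposition S/I = ⊕_{i=1}^r u_iK[Z_i], the Stanley spaces T_i = u_iK[Z_i] can be ordered so that every partial sum I ⊕ T_1 ⊕ ⋯ ⊕ T_k is a monomial ideal, and the resulting chain is a prime filtration of S/I. -/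
open MvPolynomial

namespace StanleyTwo
variable {K : Type*} [Field K]


structure PC where
  px : ℕ
  py : ℕ
  gx : Prop
  gy : Prop

def PC.mem (C : PC) (p : ℕ × ℕ) : Prop :=
  C.px ≤ p.1 ∧ C.py ≤ p.2 ∧ (¬ C.gx → p.1 = C.px) ∧ (¬ C.gy → p.2 = C.py)

def UpP (S : Set (ℕ × ℕ)) : Prop :=
  ∀ p ∈ S, (p.1 + 1, p.2) ∈ S ∧ (p.1, p.2 + 1) ∈ S

theorem UpP.mono {S : Set (ℕ × ℕ)} (h : UpP S) {p q : ℕ × ℕ} (hp : p ∈ S)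
    (h1 : p.1 ≤ q.1) (h2 : p.2 ≤ q.2) : q ∈ S := by
  obtain ⟨i, hi⟩ := Nat.exists_eq_add_of_le h1
  obtain ⟨j, hj⟩ := Nat.exists_eq_add_of_le h2
  have key : ∀ i j : ℕ, (p.1 + i, p.2 + j) ∈ S := by
    intro i
    induction i with
    | zero =>
      intro j
      induction j with
      | zero => simpa using hp
      | succ j ih => exact (h _ ih).2
    | succ i ih =>
      intro j
      exact (h _ (ih j)).1
  have hk := key i j
  rw [← hi, ← hj] at hk
  rwa [Prod.mk.eta] at hk

theorem peelP (M : Set (ℕ × ℕ)) (hM : UpP M) {m : ℕ} (C : Fin (m + 1) → PC)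
    (hdis : ∀ i j, i ≠ j → ∀ p, (C i).mem p → (C j).mem p → False)
    (hdisM : ∀ i p, (C i).mem p → p ∉ M)
    (hcov : ∀ p, p ∉ M → ∃ i, (C i).mem p) :
    ∃ j, UpP (M ∪ {p | (C j).mem p}) := by
  classical
  have crit : ∀ j, (∀ p, (C j).mem p →
      ((p.1 + 1, p.2) ∉ M → (C j).mem (p.1 + 1, p.2)) ∧
      ((p.1, p.2 + 1) ∉ M → (C j).mem (p.1, p.2 + 1))) →
      UpP (M ∪ {p | (C j).mem p}) := by
    intro j h p hp
    rcases hp with hp | hp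
    · exact ⟨Or.inl (hM p hp).1, Or.inl (hM p hp).2⟩
    · constructor
      · by_cases hq : (p.1 + 1, p.2) ∈ M
        · exact Or.inl hq
        · exact Or.inr ((h p hp).1 hq)
      · by_cases hq : (p.1, p.2 + 1) ∈ M
        · exact Or.inl hq
        · exact Or.inr ((h p hp).2 hq)
  -- Step 0 : quadrant cells are removable
  by_cases hquad : ∃ i, (C i).gx ∧ (C i).gy
  · obtain ⟨i, hgx, hgy⟩ := hquad
    refine ⟨i, crit i ?_⟩
    intro p hp
    obtain ⟨h1, h2, _, _⟩ := hp
    constructor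
    · intro _
      exact ⟨by omega, by omega, fun h => absurd hgx h, fun h => absurd hgy h⟩
    · intro _
      exact ⟨by omega, by omega, fun h => absurd hgx h, fun h => absurd hgy h⟩
  push_neg at hquad
  -- maximal points give removable point cells
  have hmaxpt : ∀ q : ℕ × ℕ, q ∉ M → (q.1 + 1, q.2) ∈ M → (q.1, q.2 + 1) ∈ M →
      ∃ j, UpP (M ∪ {p | (C j).mem p}) := by
    intro q hq hqx hqy
    obtain ⟨i, hi⟩ := hcov q hq
    obtain ⟨ha1, ha2, ha3, ha4⟩ := hi
    have hgx : ¬ (C i).gx := by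
      intro hg
      exact hdisM i (q.1 + 1, q.2)
        ⟨by omega, ha2, fun h => absurd hg h, ha4⟩ hqx
    have hgy : ¬ (C i).gy := by
      intro hg
      exact hdisM i (q.1, q.2 + 1)
        ⟨ha1, by omega, ha3, fun h => absurd hg h⟩ hqy
    have hi : (C i).mem q := ⟨ha1, ha2, ha3, ha4⟩
    refine ⟨i, crit i ?_⟩
    intro p hp
    have e1 : p.1 = q.1 := by rw [hp.2.2.1 hgx, hi.2.2.1 hgx]
    have e2 : p.2 = q.2 := by rw [hp.2.2.2 hgy, hi.2.2.2 hgy]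
    constructor
    · intro hd; exact absurd (by rwa [e1, e2]) hd
    · intro hd; exact absurd (by rwa [e1, e2]) hd
  -- bounds
  have hcorner : ∀ a b : ℕ, (∀ i, (C i).px < a) → (∀ i, (C i).py < b) → (a, b) ∈ M := by
    intro a b ha hb
    by_contra hD
    obtain ⟨i, hi⟩ := hcov _ hD
    by_cases hg : (C i).gx
    · have hgy := hquad i hg
      have := hi.2.2.2 hgy
      have := hb i
      omega
    · have := hi.2.2.1 hg
      have := ha i
      omega
  set xb : ℕ := (Finset.univ.sup fun i => (C i).px) + 1 with hxb
  set yb : ℕ := (Finset.univ.sup fun i => (C i).py) + 1 with hyb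
  have hxb' : ∀ i, (C i).px < xb := by
    intro i
    have h2 : (C i).px ≤ Finset.univ.sup fun i => (C i).px :=
      Finset.le_sup (f := fun i => (C i).px) (Finset.mem_univ i)
    omega
  have hyb' : ∀ i, (C i).py < yb := by
    intro i
    have h2 : (C i).py ≤ Finset.univ.sup fun i => (C i).py :=
      Finset.le_sup (f := fun i => (C i).py) (Finset.mem_univ i)
    omega
  -- W and H
  have hex : ∃ x : ℕ, ∃ y : ℕ, (x, y) ∈ M := ⟨xb, yb, hcorner _ _ hxb' hyb'⟩
  have hey : ∃ y : ℕ, ∃ x : ℕ, (x, y) ∈ M := ⟨yb, xb, hcorner _ _ hxb' hyb'⟩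
  set W : ℕ := Nat.find hex with hW
  set H : ℕ := Nat.find hey with hH
  obtain ⟨yW, hyW⟩ : ∃ y, (W, y) ∈ M := Nat.find_spec hex
  obtain ⟨xH, hxH⟩ : ∃ x, (x, H) ∈ M := Nat.find_spec hey
  have hWfull : ∀ x < W, ∀ y, (x, y) ∉ M := by
    intro x hx y
    have := Nat.find_min hex hx
    push_neg at this
    exact this y
  have hHfull : ∀ y < H, ∀ x, (x, y) ∉ M := by
    intro y hy x
    have := Nat.find_min hey hy
    push_neg at this
    exact this x
  -- the corner region beyond (W, yW) and (xH, H) is in M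
  have hup1 : ∀ p : ℕ × ℕ, W ≤ p.1 → yW ≤ p.2 → p ∈ M := fun p h1 h2 => hM.mono hyW h1 h2
  have hup2 : ∀ p : ℕ × ℕ, xH ≤ p.1 → H ≤ p.2 → p ∈ M := fun p h1 h2 => hM.mono hxH h1 h2
  -- the finite corner E
  by_cases hE : ∃ p : ℕ × ℕ, p ∉ M ∧ W ≤ p.1 ∧ H ≤ p.2
  · -- find a maximal element of E
    obtain ⟨p0, hp0⟩ := hE
    set Sums : Set ℕ := {n | ∃ p : ℕ × ℕ, (p ∉ M ∧ W ≤ p.1 ∧ H ≤ p.2) ∧ n = p.1 + p.2}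
      with hSums
    have hbd : BddAbove Sums := by
      refine ⟨xH + yW, ?_⟩
      rintro n ⟨p, ⟨hpM, hpW, hpH⟩, rfl⟩
      have h1 : p.1 < xH := by
        by_contra hc
        exact hpM (hup2 p (by omega) hpH)
      have h2 : p.2 < yW := by
        by_contra hc
        exact hpM (hup1 p hpW (by omega))
      omega
    have hne : Sums.Nonempty := ⟨p0.1 + p0.2, p0, hp0, rfl⟩
    obtain ⟨q, ⟨hqM, hqW, hqH⟩, hq⟩ := Nat.sSup_mem hne hbd
    have hqx : (q.1 + 1, q.2) ∈ M := by
      by_contra hc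
      have : q.1 + 1 + q.2 ∈ Sums := ⟨(q.1 + 1, q.2), ⟨hc, by omega, by omega⟩, rfl⟩
      have := le_csSup hbd this
      omega
    have hqy : (q.1, q.2 + 1) ∈ M := by
      by_contra hc
      have : q.1 + (q.2 + 1) ∈ Sums := ⟨(q.1, q.2 + 1), ⟨hc, by omega, by omega⟩, rfl⟩
      have := le_csSup hbd this
      omega
    exact hmaxpt q hqM hqx hqy
  · -- E is empty
    push_neg at hE
    have hE' : ∀ p : ℕ × ℕ, p ∉ M → W ≤ p.1 → H ≤ p.2 → False := by
      intro p h1 h2 h3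
      exact absurd h3 (by simpa using hE p h1 h2)
    -- D is nonempty
    have hD0 : ((C 0).px, (C 0).py) ∉ M :=
      hdisM 0 _ ⟨le_refl _, le_refl _, fun _ => rfl, fun _ => rfl⟩
    -- getters
    have getV : 0 < W → ∃ i, ¬ (C i).gx ∧ (C i).gy ∧ (C i).px = W - 1 := by
      intro hWpos
      have hfull : ∀ y : ℕ, (W - 1, y) ∉ M := hWfull (W - 1) (by omega)
      have hch : ∀ y : ℕ, ∃ i, (C i).mem (W - 1, y) := fun y => hcov _ (hfull y)
      choose g hg using hch
      obtain ⟨y1, y2, hne, heq⟩ := Finite.exists_ne_map_eq_of_infinite g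
      have m1 : (C (g y1)).mem (W - 1, y1) := hg y1
      have m2 : (C (g y1)).mem (W - 1, y2) := by
        rw [heq]; exact hg y2
      have hgy : (C (g y1)).gy := by
        by_contra hgy
        exact hne ((m1.2.2.2 hgy).trans (m2.2.2.2 hgy).symm)
      have hgx : ¬ (C (g y1)).gx := fun hgx => hquad _ hgx hgy
      exact ⟨g y1, hgx, hgy, (m1.2.2.1 hgx).symm⟩
    have getH : 0 < H → ∃ i, (C i).gx ∧ ¬ (C i).gy ∧ (C i).py = H - 1 := by
      intro hHpos
      have hfull : ∀ x : ℕ, (x, H - 1) ∉ M := fun x => hHfull (H - 1) (by omega) x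
      have hch : ∀ x : ℕ, ∃ i, (C i).mem (x, H - 1) := fun x => hcov _ (hfull x)
      choose g hg using hch
      obtain ⟨x1, x2, hne, heq⟩ := Finite.exists_ne_map_eq_of_infinite g
      have m1 : (C (g x1)).mem (x1, H - 1) := hg x1
      have m2 : (C (g x1)).mem (x2, H - 1) := by
        rw [heq]; exact hg x2
      have hgx : (C (g x1)).gx := by
        by_contra hgx
        exact hne ((m1.2.2.1 hgx).trans (m2.2.2.1 hgx).symm)
      have hgy : ¬ (C (g x1)).gy := fun hgy => hquad _ hgx hgy
      exact ⟨g x1, hgx, hgy, (m1.2.2.2 hgy).symm⟩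
    -- removability of extreme rays
    have remV : ∀ i, ¬ (C i).gx → (C i).gy → (C i).px = W - 1 → 0 < W → H ≤ (C i).py →
        UpP (M ∪ {p | (C i).mem p}) := by
      intro i hgx hgy hpx hWpos hpy
      apply crit i
      intro p hp
      obtain ⟨hp1, hp2, hp3, hp4⟩ := hp
      have e1 : p.1 = (C i).px := hp3 hgx
      constructor
      · intro hd
        exfalso
        exact hE' (p.1 + 1, p.2) hd (by omega) (by omega)
      · intro _
        exact ⟨by omega, by omega, fun h => by omega, fun h => absurd hgy h⟩
    have remH : ∀ i, (C i).gx → ¬ (C i).gy → (C i).py = H - 1 → 0 < H → W ≤ (C i).px →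
        UpP (M ∪ {p | (C i).mem p}) := by
      intro i hgx hgy hpy hHpos hpx
      apply crit i
      intro p hp
      obtain ⟨hp1, hp2, hp3, hp4⟩ := hp
      have e2 : p.2 = (C i).py := hp4 hgy
      constructor
      · intro _
        exact ⟨by omega, by omega, fun h => absurd hgx h, fun h => by omega⟩
      · intro hd
        exfalso
        exact hE' (p.1, p.2 + 1) hd (by omega) (by omega)
    -- final case analysis
    have hWH : 0 < W ∨ 0 < H := by
      by_contra hc
      push_neg at hc
      exact hE' _ hD0 (by omega) (by omega)
    by_cases hH0 : H = 0
    · have hWpos : 0 < W := by omega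
      obtain ⟨i, hgx, hgy, hpx⟩ := getV hWpos
      exact ⟨i, remV i hgx hgy hpx hWpos (by omega)⟩
    · have hHpos : 0 < H := Nat.pos_of_ne_zero hH0
      obtain ⟨iH, hHgx, hHgy, hHpy⟩ := getH hHpos
      by_cases haW : W ≤ (C iH).px
      · exact ⟨iH, remH iH hHgx hHgy hHpy hHpos haW⟩
      · have hWpos : 0 < W := by omega
        obtain ⟨iV, hVgx, hVgy, hVpx⟩ := getV hWpos
        by_cases hbH : H ≤ (C iV).py
        · exact ⟨iV, remV iV hVgx hVgy hVpx hWpos hbH⟩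
        · exfalso
          have hne : iV ≠ iH := by
            intro h
            rw [h] at hVgx
            exact hVgx hHgx
          exact hdis iV iH hne (W - 1, H - 1)
            ⟨by omega, by omega, fun _ => hVpx.symm, fun h => absurd hVgy h⟩
            ⟨by omega, by omega, fun h => absurd hHgx h, fun _ => hHpy.symm⟩
  -- end



def fcell (u : Fin 2 →₀ ℕ) (Z : Finset (Fin 2)) : Set (Fin 2 →₀ ℕ) :=
  (fun v => u + v) '' {v : Fin 2 →₀ ℕ | v.support ⊆ Z}

def Up1 (S : Set (Fin 2 →₀ ℕ)) : Prop :=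
  ∀ a ∈ S, ∀ i : Fin 2, a + Finsupp.single i 1 ∈ S

lemma mem_fcell {u : Fin 2 →₀ ℕ} {Z : Finset (Fin 2)} {w : Fin 2 →₀ ℕ} :
    w ∈ fcell u Z ↔ u ≤ w ∧ ∀ c : Fin 2, c ∉ Z → w c = u c := by
  constructor
  · rintro ⟨v, hv, rfl⟩
    refine ⟨le_self_add, ?_⟩
    intro c hc
    have hvc : v c = 0 := Finsupp.notMem_support_iff.mp (fun h => hc (hv h))
    simp [hvc]
  · rintro ⟨h1, h2⟩
    refine ⟨w - u, ?_, ?_⟩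
    · intro c hc
      by_contra hcZ
      have h3 := h2 c hcZ
      have h4 : (w - u) c = w c - u c := Finsupp.tsub_apply w u c
      have h5 := Finsupp.mem_support_iff.mp hc
      omega
    · ext c
      have h6 := Finsupp.le_def.mp h1 c
      simp only [Finsupp.add_apply, Finsupp.tsub_apply]
      omega

lemma self_mem_fcell (u : Fin 2 →₀ ℕ) (Z : Finset (Fin 2)) : u ∈ fcell u Z :=
  ⟨0, by simp, by simp⟩

lemma Up1.addSingle {M : Set (Fin 2 →₀ ℕ)} (hM : Up1 M) {a : Fin 2 →₀ ℕ} (ha : a ∈ M)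
    (i : Fin 2) (k : ℕ) : a + Finsupp.single i k ∈ M := by
  induction k with
  | zero => simpa using ha
  | succ k ih =>
    have h := hM _ ih i
    rwa [add_assoc, ← Finsupp.single_add] at h

lemma Up1.add {M : Set (Fin 2 →₀ ℕ)} (hM : Up1 M) {a : Fin 2 →₀ ℕ} (ha : a ∈ M)
    (c : Fin 2 →₀ ℕ) : a + c ∈ M := by
  induction c using Finsupp.induction with
  | zero => simpa using ha
  | single_add i b f _ _ ih =>
    rw [add_comm (Finsupp.single i b) f, ← add_assoc]
    exact hM.addSingle ih i b

lemma Up1.le {M : Set (Fin 2 →₀ ℕ)} (hM : Up1 M) {a b : Fin 2 →₀ ℕ} (ha : a ∈ M)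
    (hab : a ≤ b) : b ∈ M := by
  obtain ⟨c, rfl⟩ := le_iff_exists_add.mp hab
  exact hM.add ha c

def ε (a : Fin 2 →₀ ℕ) : ℕ × ℕ := (a 0, a 1)

lemma ε_inj : Function.Injective ε := by
  intro a b h
  have h0 : a 0 = b 0 := congrArg Prod.fst h
  have h1 : a 1 = b 1 := congrArg Prod.snd h
  ext i
  fin_cases i
  · exact h0
  · exact h1

lemma ε_surj : Function.Surjective ε := by
  intro p
  refine ⟨Finsupp.single 0 p.1 + Finsupp.single 1 p.2, ?_⟩
  simp [ε, Finsupp.single_apply, Prod.ext_iff]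

lemma ε_step0 (a : Fin 2 →₀ ℕ) :
    ε (a + Finsupp.single 0 1) = ((ε a).1 + 1, (ε a).2) := by
  simp [ε, Finsupp.single_apply, Prod.ext_iff]

lemma ε_step1 (a : Fin 2 →₀ ℕ) :
    ε (a + Finsupp.single 1 1) = ((ε a).1, (ε a).2 + 1) := by
  simp [ε, Finsupp.single_apply, Prod.ext_iff]

def pcOf (u : Fin 2 →₀ ℕ) (Z : Finset (Fin 2)) : PC :=
  ⟨u 0, u 1, (0 : Fin 2) ∈ Z, (1 : Fin 2) ∈ Z⟩

lemma mem_fcell_pc {u : Fin 2 →₀ ℕ} {Z : Finset (Fin 2)} {w : Fin 2 →₀ ℕ} :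
    w ∈ fcell u Z ↔ (pcOf u Z).mem (ε w) := by
  rw [mem_fcell]
  constructor
  · rintro ⟨h1, h2⟩
    exact ⟨Finsupp.le_def.mp h1 0, Finsupp.le_def.mp h1 1,
      fun h => h2 0 h, fun h => h2 1 h⟩
  · rintro ⟨l0, l1, e0, e1⟩
    refine ⟨Finsupp.le_def.mpr ?_, ?_⟩
    · intro c
      fin_cases c
      · exact l0
      · exact l1
    · intro c hc
      fin_cases c
      · exact e0 hc
      · exact e1 hc

theorem peel_f (M : Set (Fin 2 →₀ ℕ)) (hM : Up1 M) {m : ℕ}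
    (u : Fin (m + 1) → (Fin 2 →₀ ℕ)) (Z : Fin (m + 1) → Finset (Fin 2))
    (hdis : ∀ i j, i ≠ j → ∀ w, w ∈ fcell (u i) (Z i) → w ∈ fcell (u j) (Z j) → False)
    (hdisM : ∀ i w, w ∈ fcell (u i) (Z i) → w ∉ M)
    (hcov : ∀ w, w ∉ M → ∃ i, w ∈ fcell (u i) (Z i)) :
    ∃ j, Up1 (M ∪ fcell (u j) (Z j)) := by
  have hMp : UpP (ε '' M) := by
    rintro p ⟨a, ha, rfl⟩
    constructor
    · exact ⟨a + Finsupp.single 0 1, hM a ha 0, ε_step0 a⟩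
    · exact ⟨a + Finsupp.single 1 1, hM a ha 1, ε_step1 a⟩
  obtain ⟨j, hj⟩ := peelP (ε '' M) hMp (fun i => pcOf (u i) (Z i))
    (by
      intro i j hne p hpi hpj
      obtain ⟨w, rfl⟩ := ε_surj p
      exact hdis i j hne w (mem_fcell_pc.mpr hpi) (mem_fcell_pc.mpr hpj))
    (by
      intro i p hp hpM
      obtain ⟨w, rfl⟩ := ε_surj p
      obtain ⟨a, haM, hae⟩ := hpM
      rw [ε_inj hae] at haM
      exact hdisM i w (mem_fcell_pc.mpr hp) haM)
    (by
      intro p hp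
      obtain ⟨w, rfl⟩ := ε_surj p
      have hwM : w ∉ M := fun h => hp ⟨w, h, rfl⟩
      obtain ⟨i, hi⟩ := hcov w hwM
      exact ⟨i, mem_fcell_pc.mp hi⟩)
  refine ⟨j, ?_⟩
  intro a ha i
  have ha' : ε a ∈ ε '' M ∪ {p | (pcOf (u j) (Z j)).mem p} := by
    rcases ha with ha | ha
    · exact Or.inl ⟨a, ha, rfl⟩
    · exact Or.inr (mem_fcell_pc.mp ha)
  have hstep := hj (ε a) ha'
  have hcase : i = 0 ∨ i = 1 := by
    have h2 := i.isLt
    have h3 : (i : ℕ) = 0 ∨ (i : ℕ) = 1 := by omega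
    rcases h3 with h | h
    · exact Or.inl (Fin.ext h)
    · exact Or.inr (Fin.ext h)
  rcases hcase with rfl | rfl
  · have h1 := hstep.1
    rw [← ε_step0 a] at h1
    rcases h1 with ⟨b, hb, hbe⟩ | h1
    · rw [ε_inj hbe] at hb
      exact Or.inl hb
    · exact Or.inr (mem_fcell_pc.mpr h1)
  · have h1 := hstep.2
    rw [← ε_step1 a] at h1
    rcases h1 with ⟨b, hb, hbe⟩ | h1
    · rw [ε_inj hbe] at hb
      exact Or.inl hb
    · exact Or.inr (mem_fcell_pc.mpr h1)

theorem orderTheorem : ∀ (r : ℕ) (M : Set (Fin 2 →₀ ℕ)), Up1 M →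
    ∀ (u : Fin r → (Fin 2 →₀ ℕ)) (Z : Fin r → Finset (Fin 2)),
    (∀ i j, i ≠ j → ∀ w, w ∈ fcell (u i) (Z i) → w ∈ fcell (u j) (Z j) → False) →
    (∀ i w, w ∈ fcell (u i) (Z i) → w ∉ M) →
    (∀ w, w ∉ M → ∃ i, w ∈ fcell (u i) (Z i)) →
    ∃ ord : Equiv.Perm (Fin r),
      ∀ k : Fin r, Up1 (M ∪ ⋃ i : Fin r, ⋃ _ : i ≤ k, fcell (u (ord i)) (Z (ord i))) := by
  intro r
  induction r with
  | zero => exact fun M hM u Z _ _ _ => ⟨Equiv.refl _, fun k => k.elim0⟩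
  | succ n IH =>
    intro M hM u Z hdis hdisM hcov
    obtain ⟨j, hj⟩ := peel_f M hM u Z hdis hdisM hcov
    set M' : Set (Fin 2 →₀ ℕ) := M ∪ fcell (u j) (Z j) with hM'
    obtain ⟨e, he⟩ := IH M' hj (u ∘ j.succAbove) (Z ∘ j.succAbove)
      (by
        intro i i' hne w hw hw'
        exact hdis (j.succAbove i) (j.succAbove i')
          (fun h => hne (Fin.succAbove_right_injective h)) w hw hw')
      (by
        intro i w hw
        rintro (hM1 | hcell)
        · exact hdisM (j.succAbove i) w hw hM1
        · exact hdis (j.succAbove i) j (Fin.succAbove_ne j i) w hw hcell)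
      (by
        intro w hw
        have hw1 : w ∉ M := fun h => hw (Or.inl h)
        have hw2 : w ∉ fcell (u j) (Z j) := fun h => hw (Or.inr h)
        obtain ⟨i, hi⟩ := hcov w hw1
        have hne : i ≠ j := fun h => hw2 (h ▸ hi)
        obtain ⟨i', hi'⟩ := Fin.exists_succAbove_eq hne
        exact ⟨i', by rw [Function.comp_apply, Function.comp_apply, hi']; exact hi⟩)
    set ord : Equiv.Perm (Fin (n + 1)) :=
      (finSuccEquiv n).trans ((Equiv.optionCongr e).trans (finSuccEquiv' j).symm) with hordd
    have ord_zero : ord 0 = j := by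
      simp [hordd, ord]
    have ord_succ : ∀ i : Fin n, ord i.succ = j.succAbove (e i) := by
      intro i
      simp [hordd, ord]
    have SEq0 : (M ∪ ⋃ i : Fin (n + 1), ⋃ _ : i ≤ (0 : Fin (n + 1)),
        fcell (u (ord i)) (Z (ord i))) = M' := by
      ext x
      simp only [Set.mem_union, Set.mem_iUnion, hM']
      constructor
      · rintro (hx | ⟨i, hik, hx⟩)
        · exact Or.inl hx
        · rw [Fin.le_zero_iff.mp hik, ord_zero] at hx
          exact Or.inr hx
      · rintro (hx | hx)
        · exact Or.inl hx
        · exact Or.inr ⟨0, le_refl _, by rwa [ord_zero]⟩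
    have SEq : ∀ k' : Fin n,
        (M ∪ ⋃ i : Fin (n + 1), ⋃ _ : i ≤ k'.succ, fcell (u (ord i)) (Z (ord i))) =
        (M' ∪ ⋃ i : Fin n, ⋃ _ : i ≤ k',
          fcell ((u ∘ j.succAbove) (e i)) ((Z ∘ j.succAbove) (e i))) := by
      intro k'
      ext x
      simp only [Set.mem_union, Set.mem_iUnion, Function.comp_apply, hM']
      constructor
      · rintro (hx | ⟨i, hik, hx⟩)
        · exact Or.inl (Or.inl hx)
        · rcases Fin.eq_zero_or_eq_succ i with rfl | ⟨i'', rfl⟩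
          · rw [ord_zero] at hx
            exact Or.inl (Or.inr hx)
          · rw [ord_succ] at hx
            exact Or.inr ⟨i'', Fin.succ_le_succ_iff.mp hik, hx⟩
      · rintro ((hx | hx) | ⟨i', hik, hx⟩)
        · exact Or.inl hx
        · exact Or.inr ⟨0, Fin.zero_le _, by rwa [ord_zero]⟩
        · exact Or.inr ⟨i'.succ, Fin.succ_le_succ_iff.mpr hik, by rwa [ord_succ]⟩
    refine ⟨ord, ?_⟩
    intro k
    rcases Fin.eq_zero_or_eq_succ k with rfl | ⟨k', rfl⟩
    · rw [SEq0]; exact hj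
    · rw [SEq k']; exact he k'




lemma mem_span_mono_iff {σ : Type*} {T : Set (σ →₀ ℕ)} {p : MvPolynomial σ K} :
    p ∈ Submodule.span K ((fun a => mono K a) '' T) ↔ ∀ m ∈ p.support, m ∈ T := by
  classical
  constructor
  · intro hp
    induction hp using Submodule.span_induction with
    | mem x hx =>
      obtain ⟨a, haT, rfl⟩ := hx
      intro m hm
      simp only [mono] at hm
      rw [MvPolynomial.support_monomial] at hm
      simp only [if_neg one_ne_zero] at hm
      rwa [Finset.mem_singleton.mp hm]
    | zero => simp
    | add x y _ _ hx hy =>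
      intro m hm
      rcases Finset.mem_union.mp (MvPolynomial.support_add hm) with h | h
      · exact hx m h
      · exact hy m h
    | smul c x _ hx =>
      intro m hm
      exact hx m (MvPolynomial.support_smul hm)
  · intro h
    rw [MvPolynomial.as_sum p]
    apply Submodule.sum_mem
    intro v hv
    have he : (MvPolynomial.monomial v) (MvPolynomial.coeff v p)
        = (MvPolynomial.coeff v p) • mono K v := by
      simp only [mono]
      rw [MvPolynomial.smul_monomial, smul_eq_mul, mul_one]
    rw [he]
    exact Submodule.smul_mem _ _ (Submodule.subset_span ⟨v, h v hv, rfl⟩)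

lemma mem_ideal_span_mono_iff {σ : Type*} {T : Set (σ →₀ ℕ)}
    (hT : ∀ a ∈ T, ∀ b : σ →₀ ℕ, a ≤ b → b ∈ T) {p : MvPolynomial σ K} :
    p ∈ Ideal.span ((fun a => mono K a) '' T) ↔ ∀ m ∈ p.support, m ∈ T := by
  have : ((fun a => mono K a) '' T) = ((fun s => MvPolynomial.monomial s (1 : K)) '' T) := rfl
  rw [this, MvPolynomial.mem_ideal_span_monomial_image]
  constructor
  · intro h m hm
    obtain ⟨a, haT, hle⟩ := h m hm
    exact hT a haT m hle
  · intro h m hm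
    exact ⟨m, h m hm, le_refl m⟩

lemma restrict_span {σ : Type*} {T : Set (σ →₀ ℕ)}
    (hT : ∀ a ∈ T, ∀ b : σ →₀ ℕ, a ≤ b → b ∈ T) :
    Submodule.restrictScalars K (Ideal.span ((fun a => mono K a) '' T)) =
      Submodule.span K ((fun a => mono K a) '' T) := by
  ext p
  rw [Submodule.restrictScalars_mem, mem_ideal_span_mono_iff hT, mem_span_mono_iff]

lemma monomialIdeal_eq {σ : Type*} {I : Ideal (MvPolynomial σ K)}
    (hI : ∃ A : Set (σ →₀ ℕ), I = Ideal.span ((fun a => mono K a) '' A)) :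
    ∃ M : Set (σ →₀ ℕ), (∀ a ∈ M, ∀ b : σ →₀ ℕ, a ≤ b → b ∈ M) ∧
      I = Ideal.span ((fun a => mono K a) '' M) ∧
      (∀ p : MvPolynomial σ K, p ∈ I ↔ ∀ m ∈ p.support, m ∈ M) := by
  obtain ⟨A, hA⟩ := hI
  set M : Set (σ →₀ ℕ) := {m | ∃ a ∈ A, a ≤ m} with hM
  have hMup : ∀ a ∈ M, ∀ b : σ →₀ ℕ, a ≤ b → b ∈ M := by
    rintro a ⟨a', ha', hle⟩ b hab
    exact ⟨a', ha', le_trans hle hab⟩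
  have hIM : I = Ideal.span ((fun a => mono K a) '' M) := by
    apply le_antisymm
    · rw [hA]
      apply Ideal.span_mono
      apply Set.image_mono
      intro a ha
      exact ⟨a, ha, le_refl a⟩
    · rw [Ideal.span_le]
      rintro _ ⟨m', ⟨a, haA, hle⟩, rfl⟩
      have he : ((fun a => mono K a) m' : MvPolynomial σ K) = mono K a * mono K (m' - a) := by
        simp only [mono]
        rw [MvPolynomial.monomial_mul, one_mul, add_tsub_cancel_of_le hle]
      rw [he]
      apply Ideal.mul_mem_right
      rw [hA]
      exact Ideal.subset_span ⟨a, haA, rfl⟩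
  refine ⟨M, hMup, hIM, ?_⟩
  intro p
  rw [hIM]
  exact mem_ideal_span_mono_iff hMup




lemma colon_prime {T : Set (Fin 2 →₀ ℕ)}
    (hT : ∀ a ∈ T, ∀ b : Fin 2 →₀ ℕ, a ≤ b → b ∈ T)
    (w : Fin 2 →₀ ℕ) (Zk : Finset (Fin 2))
    (hchar : ∀ m : Fin 2 →₀ ℕ, (w + m ∈ T) ↔ ∃ i ∉ Zk, m i ≠ 0) :
    ((Ideal.span ((fun a => mono K a) '' T)).colon (Ideal.span {mono K w})).IsPrime := by
  classical
  set φ : Fin 2 → MvPolynomial (Fin 2) K := fun i => if i ∈ Zk then MvPolynomial.X i else 0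
    with hφ
  have haev : ∀ (m : Fin 2 →₀ ℕ) (c : K), (∀ i ∈ m.support, i ∈ Zk) →
      MvPolynomial.aeval φ (MvPolynomial.monomial m c) = MvPolynomial.monomial m c := by
    intro m c hm
    rw [MvPolynomial.aeval_monomial]
    have hprod : (m.prod fun i k => φ i ^ k)
        = m.prod fun i k => (MvPolynomial.X i : MvPolynomial (Fin 2) K) ^ k := by
      apply Finset.prod_congr rfl
      intro i hi
      simp [hφ, hm i hi]
    rw [hprod, MvPolynomial.monomial_eq]
    rfl
  have haev0 : ∀ (m : Fin 2 →₀ ℕ) (c : K), (∃ i ∈ m.support, i ∉ Zk) →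
      MvPolynomial.aeval φ (MvPolynomial.monomial m c) = 0 := by
    rintro m c ⟨i0, hi0s, hi0Z⟩
    rw [MvPolynomial.aeval_monomial, Finsupp.prod,
      Finset.prod_eq_zero hi0s
        (by simp [hφ, hi0Z, zero_pow (Finsupp.mem_support_iff.mp hi0s)]),
      mul_zero]
  have hker : ∀ p : MvPolynomial (Fin 2) K,
      (∀ m ∈ p.support, ∃ i ∉ Zk, m i ≠ 0) ↔ MvPolynomial.aeval φ p = 0 := by
    intro p
    constructor
    · intro h
      conv_lhs => rw [MvPolynomial.as_sum p]
      rw [map_sum]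
      apply Finset.sum_eq_zero
      intro m hm
      obtain ⟨i0, hi0Z, hi0⟩ := h m hm
      exact haev0 m _ ⟨i0, Finsupp.mem_support_iff.mpr hi0, hi0Z⟩
    · intro h
      by_contra hc
      push_neg at hc
      obtain ⟨m0, hm0, h0⟩ := hc
      have hm0Z : ∀ i ∈ m0.support, i ∈ Zk := by
        intro i hi
        by_contra hiZ
        exact (Finsupp.mem_support_iff.mp hi) (h0 i hiZ)
      have hco : MvPolynomial.coeff m0 (MvPolynomial.aeval φ p) = MvPolynomial.coeff m0 p := by
        conv_lhs => rw [MvPolynomial.as_sum p]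
        rw [map_sum, MvPolynomial.coeff_sum]
        rw [Finset.sum_eq_single m0]
        · rw [haev m0 _ hm0Z, MvPolynomial.coeff_monomial, if_pos rfl]
        · intro b hb hne
          by_cases hbZ : ∀ i ∈ b.support, i ∈ Zk
          · rw [haev b _ hbZ, MvPolynomial.coeff_monomial, if_neg hne]
          · push_neg at hbZ
            rw [haev0 b _ hbZ, MvPolynomial.coeff_zero]
        · intro hn
          exact absurd hm0 hn
      rw [h, MvPolynomial.coeff_zero] at hco
      exact (MvPolynomial.mem_support_iff.mp hm0) hco.symm
  have hcolon : (Ideal.span ((fun a => mono K a) '' T)).colon (Ideal.span {mono K w})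
      = RingHom.ker (MvPolynomial.aeval φ : MvPolynomial (Fin 2) K →ₐ[K] MvPolynomial (Fin 2) K) := by
    ext p
    rw [Ideal.mem_colon_span_singleton, mem_ideal_span_mono_iff hT, RingHom.mem_ker]
    rw [← hker]
    constructor
    · intro h m hm
      have hc : MvPolynomial.coeff (m + w) (p * mono K w) ≠ 0 := by
        simp only [mono]
        rw [MvPolynomial.coeff_mul_monomial, mul_one]
        exact MvPolynomial.mem_support_iff.mp hm
      have := h _ (MvPolynomial.mem_support_iff.mpr hc)
      rw [show m + w = w + m from add_comm m w] at this
      exact (hchar m).mp this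
    · intro h m' hm'
      have hc := MvPolynomial.mem_support_iff.mp hm'
      simp only [mono] at hc
      rw [MvPolynomial.coeff_mul_monomial'] at hc
      by_cases hle : w ≤ m'
      · rw [if_pos hle, mul_one] at hc
        have hmem : m' - w ∈ p.support := MvPolynomial.mem_support_iff.mpr hc
        have := (hchar (m' - w)).mpr (h _ hmem)
        rwa [add_tsub_cancel_of_le hle] at this
      · rw [if_neg hle] at hc
        exact absurd rfl hc
  rw [hcolon]
  exact RingHom.ker_isPrime _



lemma indep_residues {I : Ideal (MvPolynomial (Fin 2) K)} {M : Set (Fin 2 →₀ ℕ)}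
    (hmem : ∀ p : MvPolynomial (Fin 2) K, p ∈ I ↔ ∀ m ∈ p.support, m ∈ M) :
    LinearIndependent K (fun a : {a : Fin 2 →₀ ℕ // a ∉ M} =>
      Ideal.Quotient.mk I (mono K a.1)) := by
  classical
  rw [linearIndependent_iff']
  intro s g hsum i₀ hi₀
  have hsum' : (Ideal.Quotient.mkₐ K I) (∑ i ∈ s, g i • mono K i.1) = 0 := by
    rw [map_sum]
    simp_rw [map_smul]
    simpa [Ideal.Quotient.mkₐ_eq_mk] using hsum
  have hq : (∑ i ∈ s, g i • mono K i.1) ∈ I := by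
    rw [Ideal.Quotient.mkₐ_eq_mk] at hsum'
    exact Ideal.Quotient.eq_zero_iff_mem.mp hsum'
  have hcoeff : MvPolynomial.coeff i₀.1 (∑ i ∈ s, g i • mono K i.1) = g i₀ := by
    rw [MvPolynomial.coeff_sum]
    rw [Finset.sum_eq_single i₀]
    · simp [mono, MvPolynomial.coeff_smul, MvPolynomial.coeff_monomial]
    · intro b hb hne
      have hbne : b.1 ≠ i₀.1 := fun h => hne (Subtype.ext h)
      simp [mono, MvPolynomial.coeff_smul, MvPolynomial.coeff_monomial, hbne]
    · intro h; exact absurd hi₀ h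
  by_contra hg
  have hsupp : i₀.1 ∈ (∑ i ∈ s, g i • mono K i.1).support := by
    rw [MvPolynomial.mem_support_iff, hcoeff]; exact hg
  exact i₀.2 ((hmem _).mp hq _ hsupp)

lemma mono_notmem {I : Ideal (MvPolynomial (Fin 2) K)} {M : Set (Fin 2 →₀ ℕ)}
    (hmem : ∀ p : MvPolynomial (Fin 2) K, p ∈ I ↔ ∀ m ∈ p.support, m ∈ M)
    {r : ℕ} {u : Fin r → (Fin 2 →₀ ℕ)} {Z : Fin r → Finset (Fin 2)}
    (hLI : LinearIndependent K (stanleyFamily I u Z)) :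
    ∀ (i : Fin r) (v : Fin 2 →₀ ℕ) (hv : v.support ⊆ Z i), u i + v ∉ M := by
  intro i v hv hM
  have hne := hLI.ne_zero ⟨i, v, hv⟩
  apply hne
  rw [stanleyFamily, Ideal.Quotient.eq_zero_iff_mem]
  apply (hmem _).mpr
  intro m hm
  classical
  simp only [mono] at hm
  rw [MvPolynomial.support_monomial, if_neg one_ne_zero] at hm
  rwa [Finset.mem_singleton.mp hm]

lemma stanley_disjointM {I : Ideal (MvPolynomial (Fin 2) K)} {M : Set (Fin 2 →₀ ℕ)}
    (hmem : ∀ p : MvPolynomial (Fin 2) K, p ∈ I ↔ ∀ m ∈ p.support, m ∈ M)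
    {r : ℕ} {u : Fin r → (Fin 2 →₀ ℕ)} {Z : Fin r → Finset (Fin 2)}
    (hLI : LinearIndependent K (stanleyFamily I u Z)) :
    ∀ (i : Fin r) (w : Fin 2 →₀ ℕ), w ∈ fcell (u i) (Z i) → w ∉ M := by
  rintro i w ⟨v, hv, rfl⟩
  exact mono_notmem hmem hLI i v hv

lemma stanley_disjoint {I : Ideal (MvPolynomial (Fin 2) K)}
    {r : ℕ} {u : Fin r → (Fin 2 →₀ ℕ)} {Z : Fin r → Finset (Fin 2)}
    (hLI : LinearIndependent K (stanleyFamily I u Z)) :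
    ∀ i j, i ≠ j → ∀ w, w ∈ fcell (u i) (Z i) → w ∈ fcell (u j) (Z j) → False := by
  rintro i j hne w ⟨v, hv, hw⟩ ⟨v', hv', hw'⟩
  have heq : stanleyFamily I u Z ⟨i, v, hv⟩ = stanleyFamily I u Z ⟨j, v', hv'⟩ := by
    simp only [stanleyFamily]
    exact congrArg _ (congrArg (mono K) (hw.trans hw'.symm))
  have := hLI.injective heq
  exact hne (congrArg Sigma.fst this)

lemma stanley_cover {I : Ideal (MvPolynomial (Fin 2) K)} {M : Set (Fin 2 →₀ ℕ)}
    (hmem : ∀ p : MvPolynomial (Fin 2) K, p ∈ I ↔ ∀ m ∈ p.support, m ∈ M)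
    {r : ℕ} {u : Fin r → (Fin 2 →₀ ℕ)} {Z : Fin r → Finset (Fin 2)}
    (hD : IsStanleyDecomposition I u Z) :
    ∀ a : Fin 2 →₀ ℕ, a ∉ M → ∃ i : Fin r, a ∈ fcell (u i) (Z i) := by
  intro a haM
  by_contra hnc
  push_neg at hnc
  have hindep := indep_residues hmem
  set wfam : {a : Fin 2 →₀ ℕ // a ∉ M} → MvPolynomial (Fin 2) K ⧸ I :=
    fun b => Ideal.Quotient.mk I (mono K b.1) with hwfam
  set sset : Set {a : Fin 2 →₀ ℕ // a ∉ M} := {b | ∃ i : Fin r, b.1 ∈ fcell (u i) (Z i)}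
    with hsset
  have hns : (⟨a, haM⟩ : {a : Fin 2 →₀ ℕ // a ∉ M}) ∉ sset := by
    rintro ⟨i, hi⟩
    exact (hnc i) hi
  have hnotmem := hindep.notMem_span_image hns
  apply hnotmem
  have hrange : Set.range (stanleyFamily I u Z) ⊆ wfam '' sset := by
    rintro _ ⟨⟨i, v, hv⟩, rfl⟩
    exact ⟨⟨u i + v, mono_notmem hmem hD.1 i v hv⟩, ⟨i, ⟨v, hv, rfl⟩⟩, rfl⟩
  have htop : wfam ⟨a, haM⟩ ∈ Submodule.span K (Set.range (stanleyFamily I u Z)) := by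
    rw [hD.2]; trivial
  exact Submodule.span_mono hrange htop

end StanleyTwo
namespace StanleyTwo
variable {K : Type*} [Field K]

lemma stanleySubspace_eq {a : Fin 2 →₀ ℕ} {Zi : Finset (Fin 2)} :
    stanleySubspace K a Zi =
      Submodule.span K ((fun a => mono K a) '' StanleyTwo.fcell a Zi) := by
  rw [stanleySubspace, StanleyTwo.fcell, Set.image_image]

lemma span_fcell (w : Fin 2 →₀ ℕ) (Zk : Finset (Fin 2)) :
    Ideal.span ((fun a => mono K a) '' StanleyTwo.fcell w Zk) =
      Ideal.span {mono K w} := by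
  apply le_antisymm
  · rw [Ideal.span_le]
    rintro _ ⟨w', ⟨v, hv, rfl⟩, rfl⟩
    have he : ((fun a => mono K a) (w + v) : MvPolynomial (Fin 2) K)
        = mono K w * mono K v := by
      simp only [mono]
      rw [MvPolynomial.monomial_mul, one_mul]
    rw [he]
    exact Ideal.mul_mem_right _ _ (Ideal.subset_span (Set.mem_singleton _))
  · rw [Ideal.span_le, Set.singleton_subset_iff]
    exact Ideal.subset_span ⟨w, StanleyTwo.self_mem_fcell w Zk, rfl⟩

end StanleyTwo


/-- In `S = K[x,y]` every Stanley decomposition of `S/I`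
corresponds to a prime filtration: the Stanley spaces can be ordered so that
every partial sum `I ⊕ T_1 ⊕ ⋯ ⊕ T_k` is a monomial ideal and the resulting
chain is a prime filtration of `S/I`. -/
theorem every_stanley_decomposition_corresponds_two_variables
    {K : Type*} [Field K] (I : Ideal (MvPolynomial (Fin 2) K))
    (hI : IsMonomialIdeal I) {r : ℕ}
    (u : Fin r → (Fin 2 →₀ ℕ)) (Z : Fin r → Finset (Fin 2))
    (hD : IsStanleyDecomposition I u Z) :
    ∃ ord : Equiv.Perm (Fin r),
      (∀ k : Fin r, ∃ J : Ideal (MvPolynomial (Fin 2) K), IsMonomialIdeal J ∧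
        stanleyPartialSum I u Z ord k = Submodule.restrictScalars K J) ∧
      ∃ c : Fin (r + 1) → Ideal (MvPolynomial (Fin 2) K),
        IsPrimeFiltration I c (fun k => u (ord k)) ∧
        ∀ k : Fin r, Submodule.restrictScalars K (c k.succ) =
          stanleyPartialSum I u Z ord k := by
  classical
  obtain ⟨M, hMle, hIeq, hmem⟩ := StanleyTwo.monomialIdeal_eq hI
  have hMup : StanleyTwo.Up1 M := fun a ha i => hMle a ha _ le_self_add
  have hdis := StanleyTwo.stanley_disjoint hD.1
  have hdisM := StanleyTwo.stanley_disjointM hmem hD.1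
  have hcov := StanleyTwo.stanley_cover hmem hD
  obtain ⟨ord, hord⟩ := StanleyTwo.orderTheorem r M hMup u Z hdis hdisM hcov
  set N : ℕ → Set (Fin 2 →₀ ℕ) := fun t =>
    M ∪ ⋃ i : Fin r, ⋃ _ : (i : ℕ) < t, StanleyTwo.fcell (u (ord i)) (Z (ord i)) with hN
  have hN0 : N 0 = M := by
    simp [hN]
  have hNsucc : ∀ k : Fin r,
      N ((k : ℕ) + 1) = N (k : ℕ) ∪ StanleyTwo.fcell (u (ord k)) (Z (ord k)) := by
    intro k
    ext x
    simp only [hN, Set.mem_union, Set.mem_iUnion]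
    constructor
    · rintro (hx | ⟨i, hik, hx⟩)
      · exact Or.inl (Or.inl hx)
      · by_cases hik' : (i : ℕ) < (k : ℕ)
        · exact Or.inl (Or.inr ⟨i, hik', hx⟩)
        · have hik'' : i = k := Fin.ext (by omega)
          exact Or.inr (hik'' ▸ hx)
    · rintro ((hx | ⟨i, hik, hx⟩) | hx)
      · exact Or.inl hx
      · exact Or.inr ⟨i, by omega, hx⟩
      · exact Or.inr ⟨k, by omega, hx⟩
  have hNle : ∀ k : Fin r, N ((k : ℕ) + 1) =
      M ∪ ⋃ i : Fin r, ⋃ _ : i ≤ k, StanleyTwo.fcell (u (ord i)) (Z (ord i)) := by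
    intro k
    ext x
    simp only [hN, Set.mem_union, Set.mem_iUnion]
    constructor
    · rintro (hx | ⟨i, hik, hx⟩)
      · exact Or.inl hx
      · exact Or.inr ⟨i, Fin.le_def.mpr (by omega), hx⟩
    · rintro (hx | ⟨i, hik, hx⟩)
      · exact Or.inl hx
      · exact Or.inr ⟨i, by have := Fin.le_def.mp hik; omega, hx⟩
  have hNup : ∀ t : ℕ, t ≤ r → StanleyTwo.Up1 (N t) := by
    intro t htr
    rcases Nat.eq_zero_or_pos t with rfl | ht
    · rw [hN0]; exact hMup
    · have hk : t - 1 < r := by omega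
      have he : t = ((⟨t - 1, hk⟩ : Fin r) : ℕ) + 1 := by simp; omega
      rw [he, hNle ⟨t - 1, hk⟩]
      exact hord ⟨t - 1, hk⟩
  have hNlec : ∀ t : ℕ, t ≤ r → ∀ a ∈ N t, ∀ b : Fin 2 →₀ ℕ, a ≤ b → b ∈ N t :=
    fun t ht a ha b hab => (hNup t ht).le ha hab
  have hNr : N r = Set.univ := by
    ext x
    simp only [hN, Set.mem_union, Set.mem_iUnion, Set.mem_univ, iff_true]
    by_cases hx : x ∈ M
    · exact Or.inl hx
    · obtain ⟨i, hi⟩ := hcov x hx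
      obtain ⟨i', hi'⟩ := ord.surjective i
      exact Or.inr ⟨i', i'.isLt, by rwa [hi']⟩
  have hchar : ∀ k : Fin r, ∀ m : Fin 2 →₀ ℕ,
      (u (ord k) + m ∈ N (k : ℕ)) ↔ ∃ i ∉ Z (ord k), m i ≠ 0 := by
    intro k m
    constructor
    · intro hmem'
      by_contra hc
      push_neg at hc
      have hsupp : m.support ⊆ Z (ord k) := by
        intro i hi
        by_contra hiZ
        exact (Finsupp.mem_support_iff.mp hi) (hc i hiZ)
      have hcell : u (ord k) + m ∈ StanleyTwo.fcell (u (ord k)) (Z (ord k)) :=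
        ⟨m, hsupp, rfl⟩
      rcases hmem' with hx | hx
      · exact hdisM (ord k) _ hcell hx
      · rw [Set.mem_iUnion] at hx
        obtain ⟨i, hx⟩ := hx
        rw [Set.mem_iUnion] at hx
        obtain ⟨hik, hx⟩ := hx
        refine StanleyTwo.stanley_disjoint hD.1 (ord i) (ord k) ?_ _ hx hcell
        intro h
        rcases ord.injective h with rfl
        omega
    · rintro ⟨i0, hi0Z, hi0⟩
      have hw : u (ord k) ∈ N ((k : ℕ) + 1) := by
        rw [hNsucc k]; exact Or.inr (StanleyTwo.self_mem_fcell _ _)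
      have hstep := hNup ((k : ℕ) + 1) (by have := k.isLt; omega) _ hw i0
      have hnotc : u (ord k) + Finsupp.single i0 1 ∉
          StanleyTwo.fcell (u (ord k)) (Z (ord k)) := by
        rintro ⟨v, hv, hveq⟩
        have hvs := add_right_injective (u (ord k)) hveq
        subst hvs
        refine hi0Z (hv ?_)
        rw [Finsupp.support_single_ne_zero i0 one_ne_zero]
        exact Finset.mem_singleton_self i0
      rw [hNsucc k] at hstep
      have hstep' : u (ord k) + Finsupp.single i0 1 ∈ N (k : ℕ) := by
        rcases hstep with h | h
        · exact h
        · exact absurd h hnotc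
      have hle : u (ord k) + Finsupp.single i0 1 ≤ u (ord k) + m := by
        apply add_le_add le_rfl
        rw [Finsupp.single_le_iff]
        omega
      exact hNlec (k : ℕ) (by have := k.isLt; omega) _ hstep' _ hle
  have hps : ∀ k : Fin r, stanleyPartialSum I u Z ord k =
      Submodule.span K ((fun a => mono K a) '' N ((k : ℕ) + 1)) := by
    intro k
    rw [stanleyPartialSum, hIeq, StanleyTwo.restrict_span hMle]
    rw [hNle k, Set.image_union, Submodule.span_union]
    congr 1
    simp_rw [StanleyTwo.stanleySubspace_eq, Set.image_iUnion,
      Submodule.span_iUnion]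
  refine ⟨ord, ?_, ?_⟩
  · intro k
    refine ⟨Ideal.span ((fun a => mono K a) '' N ((k : ℕ) + 1)), ⟨_, rfl⟩, ?_⟩
    rw [StanleyTwo.restrict_span (hNlec ((k : ℕ) + 1) (by have := k.isLt; omega)), hps k]
  · refine ⟨fun j => Ideal.span ((fun a => mono K a) '' N ((j : ℕ))), ⟨?_, ?_, ?_, ?_⟩, ?_⟩
    · show Ideal.span ((fun a => mono K a) '' N (((0 : Fin (r + 1)) : ℕ))) = I
      rw [show (((0 : Fin (r + 1))) : ℕ) = 0 from rfl, hN0]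
      exact hIeq.symm
    · show Ideal.span ((fun a => mono K a) '' N (((Fin.last r) : ℕ))) = ⊤
      rw [Fin.val_last, hNr]
      rw [Ideal.eq_top_iff_one]
      refine Ideal.subset_span ⟨0, Set.mem_univ 0, ?_⟩
      simp only [mono]
      rw [MvPolynomial.monomial_zero', MvPolynomial.C_1]
    · intro j
      show Ideal.span ((fun a => mono K a) '' N ((j.succ : ℕ))) =
        Ideal.span ((fun a => mono K a) '' N ((j.castSucc : ℕ))) ⊔
          Ideal.span {mono K (u (ord j))}
      rw [Fin.val_succ, Fin.coe_castSucc, hNsucc j, Set.image_union, Ideal.span_union,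
        StanleyTwo.span_fcell]
    · intro j
      have hcs : ((j.castSucc : Fin (r + 1)) : ℕ) = (j : ℕ) := Fin.coe_castSucc j
      show Ideal.IsPrime ((Ideal.span ((fun a => mono K a) '' N ((j.castSucc : ℕ)))).colon
        (Ideal.span {mono K (u (ord j))}))
      rw [hcs]
      exact StanleyTwo.colon_prime
        (hNlec (j : ℕ) (by have := j.isLt; omega)) (u (ord j)) (Z (ord j)) (hchar j)
    · intro k
      show Submodule.restrictScalars K
          (Ideal.span ((fun a => mono K a) '' N ((k.succ : ℕ)))) = _
      rw [Fin.val_succ,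
        StanleyTwo.restrict_span (hNlec ((k : ℕ) + 1) (by have := k.isLt; omega)), hps k]
end

section
/- Let I = (u_1,…,u_m) be a monomial ideal in S = K[x_1,…,x_n] and u a monomial of S; let I^p and u^p be their polarizations in T. If I^p : u^p is a prime ideal, then I^p : u^p = (x_{i_1 j_1},…,x_{i_k j_k}) for variables x_{i_r j_r} of T with i_r ≠ i_s whenever r ≠ s. -/
open MvPolynomial

/-- The exponent vector of the polarization `u^p = ∏ᵢ ∏_{j<aᵢ} x_{ij}` of the
monomial `u = ∏ᵢ xᵢ^{aᵢ}`: the squarefree exponent supported on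
`{(i,j) : j < a i}`, in the variables of `T = K[x_{ij}]`. -/
noncomputable def polarExp {n : ℕ} (a : Fin n →₀ ℕ) : (Fin n × ℕ) →₀ ℕ :=
  Finsupp.indicator
    (a.support.biUnion fun i => (Finset.range (a i)).image fun j => (i, j))
    (fun _ _ => 1)

/-- The polarization `I^p ⊂ T = K[x_{ij}]` of a monomial ideal `I ⊂ S`: the
ideal generated by the polarizations of the monomials of `I` (for a monomial
ideal this is the ideal generated by the polarizations of any set of monomial
generators). -/
noncomputable def polarIdeal {K : Type*} [Field K] {n : ℕ}
    (I : Ideal (MvPolynomial (Fin n) K)) : Ideal (MvPolynomial (Fin n × ℕ) K) :=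
  Ideal.span ((fun a => mono K (polarExp a)) '' {a : Fin n →₀ ℕ | mono K a ∈ I})

lemma polarExp_apply {n : ℕ} (a : Fin n →₀ ℕ) (v : Fin n × ℕ) :
    polarExp a v = if v.2 < a v.1 then 1 else 0 := by
  obtain ⟨i, j⟩ := v
  unfold polarExp
  by_cases h : j < a i
  · rw [Finsupp.indicator_of_mem, if_pos h]
    simp only [Finset.mem_biUnion, Finset.mem_image, Finset.mem_range,
      Finsupp.mem_support_iff]
    exact ⟨i, by omega, j, h, rfl⟩
  · rw [Finsupp.indicator_of_notMem, if_neg h]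
    simp only [Finset.mem_biUnion, Finset.mem_image, Finset.mem_range,
      Finsupp.mem_support_iff, not_exists, not_and]
    rintro i' - j' hj' h'
    rw [Prod.mk.injEq] at h'
    obtain ⟨rfl, rfl⟩ := h'
    exact h hj'

lemma mem_polarIdeal_iff {K : Type*} [Field K] {n : ℕ}
    (I : Ideal (MvPolynomial (Fin n) K)) (f : MvPolynomial (Fin n × ℕ) K) :
    f ∈ polarIdeal I ↔
      ∀ e ∈ f.support, ∃ b : Fin n →₀ ℕ, mono K b ∈ I ∧ polarExp b ≤ e := by
  have himg : (fun a => mono K (polarExp a)) '' {a : Fin n →₀ ℕ | mono K a ∈ I}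
      = (fun s => monomial s (1 : K)) '' (polarExp '' {a : Fin n →₀ ℕ | mono K a ∈ I}) := by
    rw [Set.image_image]
    rfl
  rw [polarIdeal, himg, mem_ideal_span_monomial_image]
  constructor
  · intro h e he
    obtain ⟨si, ⟨b, hb, rfl⟩, hle⟩ := h e he
    exact ⟨b, hb, hle⟩
  · intro h e he
    obtain ⟨b, hb, hle⟩ := h e he
    exact ⟨polarExp b, ⟨b, hb, rfl⟩, hle⟩

/-- If the colon ideal `I^p : u^p` (in the polarization ring
`T`) is prime, then it is generated by variables `x_{i₁j₁},…,x_{i_kj_k}` whose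
first indices are pairwise distinct. -/
theorem polarization_colon_prime_generated_by_variables
    {K : Type*} [Field K] {n : ℕ} (I : Ideal (MvPolynomial (Fin n) K))
    (hI : IsMonomialIdeal I) (a : Fin n →₀ ℕ)
    (hp : ((polarIdeal I).colon (Ideal.span {mono K (polarExp a)})).IsPrime) :
    ∃ (k : ℕ) (p : Fin k → Fin n × ℕ),
      Function.Injective (fun r => (p r).1) ∧
      (polarIdeal I).colon (Ideal.span {mono K (polarExp a)}) =
        Ideal.span (Set.range fun r => (X (p r) : MvPolynomial (Fin n × ℕ) K)) := by
  classical
  set P : Ideal (MvPolynomial (Fin n × ℕ) K) :=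
    (polarIdeal I).colon (Ideal.span {mono K (polarExp a)}) with hPdef
  have hne : P ≠ ⊤ := hp.ne_top
  have h10 : (1 : K) ≠ 0 := one_ne_zero
  -- u^p ∉ I^p
  have huJ : mono K (polarExp a) ∉ polarIdeal I := by
    intro h
    apply hne
    rw [Ideal.eq_top_iff_one]
    rw [hPdef, Ideal.mem_colon_span_singleton, one_mul]
    exact h
  -- every variable in P is of the form X (i, a i)
  have hvar : ∀ i : Fin n, ∀ j : ℕ,
      (X (i, j) : MvPolynomial (Fin n × ℕ) K) ∈ P → j = a i := by
    intro i j hX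
    by_contra hja
    rw [hPdef, Ideal.mem_colon_span_singleton] at hX
    have h2 : (X (i, j) : MvPolynomial (Fin n × ℕ) K) * mono K (polarExp a)
        = monomial (Finsupp.single (i, j) 1 + polarExp a) (1 : K) := by
      rw [mono, X, monomial_mul, one_mul]
    rw [h2, mem_polarIdeal_iff] at hX
    obtain ⟨b, hbI, hble⟩ := hX (Finsupp.single (i, j) 1 + polarExp a)
      (by rw [support_monomial, if_neg h10]; exact Finset.mem_singleton_self _)
    -- then polarExp b ≤ polarExp a
    have hble' : polarExp b ≤ polarExp a := by
      rw [Finsupp.le_def] at hble ⊢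
      intro v
      have hv := hble v
      rw [Finsupp.add_apply] at hv
      by_cases hvij : v = (i, j)
      · subst hvij
        rw [polarExp_apply, polarExp_apply]
        by_cases hlt : j < a i
        · rw [if_pos hlt]
          split <;> omega
        · -- a i < j
          have hai : a i < j := by omega
          rw [if_neg hlt]
          simp only
          by_cases hbij : j < b i
          · exfalso
            have hv2 := hble (i, a i)
            rw [Finsupp.add_apply, polarExp_apply, polarExp_apply] at hv2
            simp only at hv2
            rw [if_pos (by omega : a i < b i), if_neg (by omega : ¬ a i < a i),
              Finsupp.single_apply, if_neg (by simp [Prod.ext_iff]; omega)] at hv2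
            omega
          · rw [if_neg hbij]
      · rw [Finsupp.single_apply, if_neg (by exact fun h => hvij h.symm)] at hv
        omega
    -- hence u^p ∈ I^p, contradiction
    apply huJ
    rw [mem_polarIdeal_iff]
    intro e he
    rw [mono, support_monomial, if_neg h10, Finset.mem_singleton] at he
    subst he
    exact ⟨b, hbI, hble'⟩
  -- P is a monomial ideal: monomials of members are members
  have hPmono : ∀ f ∈ P, ∀ c ∈ f.support, mono K c ∈ P := by
    intro f hf c hc
    rw [hPdef, Ideal.mem_colon_span_singleton, mem_polarIdeal_iff] at hf ⊢
    intro e he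
    rw [mono, mono, monomial_mul, one_mul, support_monomial, if_neg h10,
      Finset.mem_singleton] at he
    subst he
    apply hf (c + polarExp a)
    rw [mem_support_iff, mono, coeff_mul_monomial, mul_one]
    exact mem_support_iff.mp hc
  -- the set of relevant first indices
  set V : Finset (Fin n) := Finset.univ.filter
    (fun i => (X (i, a i) : MvPolynomial (Fin n × ℕ) K) ∈ P) with hV
  have hPspan : P = Ideal.span
      (X '' ((fun i => (i, a i)) '' (V : Set (Fin n))) :
        Set (MvPolynomial (Fin n × ℕ) K)) := by
    apply le_antisymm
    · intro f hf
      rw [mem_ideal_span_X_image]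
      intro c hc
      have hcP : mono K c ∈ P := hPmono f hf c hc
      have hc0 : c ≠ 0 := by
        rintro rfl
        apply hne
        rw [Ideal.eq_top_iff_one]
        simpa [mono] using hcP
      -- mono c = ∏ X v ^ c v
      have heq : mono K c = ∏ v ∈ c.support, (X v : MvPolynomial (Fin n × ℕ) K) ^ c v := by
        rw [mono, monomial_eq, C_1, one_mul, Finsupp.prod]
      rw [heq] at hcP
      have := (Ideal.IsPrime.prod_mem_iff (hp := hp)).mp hcP
      obtain ⟨v, hvs, hvP⟩ := this
      have hXv : (X v : MvPolynomial (Fin n × ℕ) K) ∈ P :=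
        hp.mem_of_pow_mem _ hvP
      obtain ⟨i, j⟩ := v
      have hj : j = a i := hvar i j hXv
      rw [hj] at hXv hvs
      refine ⟨(i, a i), ⟨i, ?_, rfl⟩, Finsupp.mem_support_iff.mp hvs⟩
      simp only [hV, Finset.coe_filter, Set.mem_setOf_eq, Finset.mem_univ, true_and]
      exact hXv
    · rw [Ideal.span_le]
      rintro _ ⟨_, ⟨i, hi, rfl⟩, rfl⟩
      simp only [hV, Finset.coe_filter, Set.mem_setOf_eq, Finset.mem_univ, true_and] at hi
      exact hi
  -- enumerate V
  refine ⟨V.card, fun r => ((V.equivFin.symm r : Fin n), a (V.equivFin.symm r)), ?_, ?_⟩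
  · intro r s hrs
    simp only at hrs
    exact V.equivFin.symm.injective (Subtype.val_injective hrs)
  · have hrange : (Set.range fun r : Fin V.card =>
        ((V.equivFin.symm r : Fin n), a (V.equivFin.symm r)))
        = (fun i => (i, a i)) '' (V : Set (Fin n)) := by
      ext v
      constructor
      · rintro ⟨r, rfl⟩
        exact ⟨(V.equivFin.symm r : Fin n), (V.equivFin.symm r).2, rfl⟩
      · rintro ⟨i, hi, rfl⟩
        exact ⟨V.equivFin ⟨i, hi⟩, by simp⟩
    rw [hPspan]
    congr 1
    rw [← hrange]
    exact (Set.range_comp _ _).symm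
end

section
/- Let R be a Noetherian ring and M a finitely generated R-module with a prime filtration F: 0 = M_0 ⊂ M_1 ⊂ ⋯ ⊂ M_r = M, where M_i/M_{i−1} ≅ R/P_i for prime ideals P_i. Then for every prime ideal P of R, the length multiplicity satisfies mult_M(P) ≤ |{i ∈ {1,…,r} : P_i = P}|, i.e., mult_M(P) is at most the number of factors of F isomorphic to R/P. -/
/-- The length multiplicity `mult_M(P) = length_{R_P}(H⁰_{PR_P}(M_P))`: the
length of the submodule of the localization `M_P` consisting of the elements
annihilated by some power of the maximal ideal of `R_P`. Here the length of a
module is the Krull dimension of its lattice of submodules. -/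
noncomputable def lengthMult (R : Type*) [CommRing R] (M : Type*) [AddCommGroup M]
    [Module R M] (P : Ideal R) [P.IsPrime] : WithBot ℕ∞ :=
  Order.krullDim (Submodule (Localization.AtPrime P)
    (↥(⨆ k : ℕ, Submodule.torsionBySet (Localization.AtPrime P)
        (LocalizedModule P.primeCompl M)
        ((IsLocalRing.maximalIdeal (Localization.AtPrime P) ^ k : Ideal _) : Set _))))


open Order

lemma krullDim_le_of_covby_top {A N : Type*} [Ring A] [AddCommGroup N] [Module A N]
    {b : Submodule A N} (hb : b ⋖ ⊤) :
    Order.krullDim (Submodule A N) ≤ Order.krullDim (Submodule A ↥b) + 1 := by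
  rw [Order.krullDim]
  apply iSup_le
  intro p
  set n := p.length with hn
  -- ℕ-indexed versions
  set G : ℕ → Submodule A N := fun k => p ⟨min k n, by omega⟩ with hG
  have hGstep : ∀ k, k < n → G k < G (k + 1) := by
    intro k hk
    have := p.strictMono (show (⟨min k n, by omega⟩ : Fin (n+1)) < ⟨min (k+1) n, by omega⟩ by
      simp [Fin.lt_def]; omega)
    exact this
  set g : ℕ → Submodule A ↥b := fun k => Submodule.comap b.subtype (G k) with hg
  have hgmono : ∀ j k, j ≤ k → g j ≤ g k := by
    intro j k hjk
    apply Submodule.comap_mono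
    exact p.monotone (by simp [Fin.le_def]; omega)
  -- at most one step where g is not strict
  have key : ∀ j k, j < n → k < n → g j = g (j+1) → g k = g (k+1) → j = k := by
    intro j k hj hk hgj hgk
    have supstep : ∀ i, i < n → g i = g (i+1) →
        G i ⊔ b = b ∧ G (i+1) ⊔ b = ⊤ := by
      intro i hi hgi
      have hinf : b ⊓ G (i+1) ≤ b ⊓ G i := by
        rw [← Submodule.map_comap_subtype, ← Submodule.map_comap_subtype]
        exact Submodule.map_mono hgi.symm.le
      have hsup : G i ⊔ b < G (i+1) ⊔ b := by
        refine sup_lt_sup_of_lt_of_inf_le_inf (hGstep i hi) ?_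
        rwa [inf_comm (G (i+1)) b, inf_comm (G i) b]
      have h1 : G i ⊔ b = b := by
        by_contra hne
        have : b < G i ⊔ b := lt_of_le_of_ne le_sup_right (Ne.symm hne)
        exact hb.2 this (lt_of_lt_of_le hsup le_top)
      have h2 : G (i+1) ⊔ b = ⊤ := by
        have hlt : b < G (i+1) ⊔ b := lt_of_le_of_lt h1.ge hsup
        by_contra hne
        exact hb.2 hlt (lt_of_le_of_ne le_top hne)
      exact ⟨h1, h2⟩
    by_contra hne
    rcases Nat.lt_or_ge j k with h | h
    · have h1 := (supstep j hj hgj).2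
      have h2 := (supstep k hk hgk).1
      have : G (j+1) ⊔ b ≤ G k ⊔ b := sup_le_sup_right (p.monotone (by simp [Fin.le_def]; omega)) b
      rw [h1, h2] at this
      exact hb.lt.not_ge this
    · have hlt : k < j := by omega
      have h1 := (supstep k hk hgk).2
      have h2 := (supstep j hj hgj).1
      have : G (k+1) ⊔ b ≤ G j ⊔ b := sup_le_sup_right (p.monotone (by simp [Fin.le_def]; omega)) b
      rw [h1, h2] at this
      exact hb.lt.not_ge this
  have hstrict : ∀ i0, i0 < n → g i0 = g (i0+1) →
      ∀ j, j < n → j ≠ i0 → g j < g (j+1) := by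
    intro i0 hi0 heq j hj hne
    refine lt_of_le_of_ne (hgmono j (j+1) (by omega)) ?_
    intro h
    exact hne (key j i0 hj hi0 h heq)
  by_cases hall : ∀ k, k < n → g k < g (k+1)
  · let q : LTSeries (Submodule A ↥b) := ⟨n, fun i => g i, fun i => by
      simpa using hall i.1 i.2⟩
    have h1 : (n : WithBot ℕ∞) ≤ Order.krullDim (Submodule A ↥b) :=
      Order.LTSeries.length_le_krullDim q
    exact le_trans h1 (le_add_of_nonneg_right (by norm_num))
  · push_neg at hall
    obtain ⟨i0, hi0, hnlt⟩ := hall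
    have heq : g i0 = g (i0 + 1) :=
      ((hgmono i0 (i0+1) (by omega)).lt_or_eq.resolve_left hnlt)
    have hst := hstrict i0 hi0 heq
    have hn1 : 1 ≤ n := by omega
    let q : LTSeries (Submodule A ↥b) :=
      ⟨n - 1, fun i => g (if (i : ℕ) ≤ i0 then (i : ℕ) else (i : ℕ) + 1), fun i => by
        simp only [Fin.coe_castSucc, Fin.val_succ]
        have hi : (i : ℕ) < n - 1 := i.2
        split_ifs with h1 h2 h3
        · exact hst i.1 (by omega) (by omega)
        · -- i = i0
          have : (i : ℕ) = i0 := by omega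
          rw [this, heq]
          exact hst (i0+1) (by omega) (by omega)
        · omega
        · exact hst (i.1+1) (by omega) (by omega)⟩
    have h1 : ((n - 1 : ℕ) : WithBot ℕ∞) ≤ Order.krullDim (Submodule A ↥b) :=
      Order.LTSeries.length_le_krullDim q
    have h2 : (n : WithBot ℕ∞) = (((n-1) + 1 : ℕ) : WithBot ℕ∞) := by
      congr 1
      omega
    rw [h2, Nat.cast_add, Nat.cast_one]
    exact add_le_add_left h1 1

lemma comap_subtype_covby {A N : Type*} [Ring A] [AddCommGroup N] [Module A N]
    {b U V : Submodule A N} (hU : U ≤ b) (hV : V ≤ b) (h : U ⋖ V) :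
    Submodule.comap b.subtype U ⋖ Submodule.comap b.subtype V := by
  have hmapU : Submodule.map b.subtype (Submodule.comap b.subtype U) = U := by
    rw [Submodule.map_comap_subtype, inf_eq_right.mpr hU]
  have hmapV : Submodule.map b.subtype (Submodule.comap b.subtype V) = V := by
    rw [Submodule.map_comap_subtype, inf_eq_right.mpr hV]
  have hcm : ∀ z : Submodule A ↥b,
      Submodule.comap b.subtype (Submodule.map b.subtype z) = z := by
    intro z
    rw [Submodule.comap_map_eq, Submodule.ker_subtype, sup_bot_eq]
  constructor
  · refine lt_of_le_of_ne (Submodule.comap_mono h.1.le) fun he => ?_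
    rw [← hmapU, ← hmapV, he] at h
    exact h.1.ne rfl
  · intro z hz1 hz2
    refine h.2 (c := Submodule.map b.subtype z) ?_ ?_
    · refine lt_of_le_of_ne (by rw [← hmapU]; exact Submodule.map_mono hz1.le) fun he => ?_
      exact hz1.ne' (by rw [← hcm z, ← he])
    · refine lt_of_le_of_ne (by rw [← hmapV]; exact Submodule.map_mono hz2.le) fun he => ?_
      exact hz2.ne (by rw [← hcm z, he])

open scoped Classical in
lemma krullDim_le_count_strict_steps {A : Type*} [Ring A] (k : ℕ) :
    ∀ (N : Type*) [AddCommGroup N] [Module A N] (s : Fin (k+1) → Submodule A N),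
    Monotone s → s 0 = ⊥ → s (Fin.last k) = ⊤ →
    (∀ j : Fin k, s j.castSucc = s j.succ ∨ s j.castSucc ⋖ s j.succ) →
    Order.krullDim (Submodule A N) ≤
      (((Finset.univ.filter (fun j : Fin k => s j.castSucc ≠ s j.succ)).card : ℕ) : WithBot ℕ∞) := by
  induction k with
  | zero =>
    intro N _ _ s hmono h0 hl hs
    have hbt : (⊥ : Submodule A N) = ⊤ := by rw [← h0, ← hl]; rfl
    have : Subsingleton (Submodule A N) :=
      ⟨fun a c => le_antisymm (le_top.trans_eq hbt.symm |>.trans bot_le)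
        (le_top.trans_eq hbt.symm |>.trans bot_le)⟩
    refine le_trans (Order.krullDim_nonpos_of_subsingleton) ?_
    exact_mod_cast Nat.zero_le _
  | succ k ih =>
    intro N _ _ s hmono h0 hl hs
    have hsucclast : s (Fin.last k).succ = ⊤ := by rw [← hl]; rfl
    have hsplit : (Finset.univ.filter
          (fun j : Fin (k+1) => s j.castSucc ≠ s j.succ)).card
        = (Finset.univ.filter
            (fun j : Fin k => s j.castSucc.castSucc ≠ s j.succ.castSucc)).card
          + (if s (Fin.last k).castSucc ≠ s (Fin.last k).succ then 1 else 0) := by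
      rw [Finset.card_filter, Finset.card_filter, Fin.sum_univ_castSucc]
      rfl
    rcases hs (Fin.last k) with heq | hcov
    · -- last step trivial: use prefix chain on same module
      have hle := ih N (fun i => s i.castSucc) (fun a c hac => hmono (by simpa using hac))
        (by simpa using h0)
        (by show s (Fin.last k).castSucc = ⊤; rw [heq, hsucclast])
        (fun j => hs j.castSucc)
      rw [hsplit, if_neg (by simpa using heq), add_zero]
      exact hle
    · -- last step a covering
      set b := s (Fin.last k).castSucc with hb
      have hbcov : b ⋖ ⊤ := by rw [hb, ← hsucclast]; exact hcov
      have hstep1 : Order.krullDim (Submodule A N) ≤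
          Order.krullDim (Submodule A ↥b) + 1 := krullDim_le_of_covby_top hbcov
      have hleb : ∀ i : Fin (k+1), s i.castSucc ≤ b :=
        fun i => hmono (Fin.castSucc_le_castSucc_iff.mpr (Fin.le_last i))
      have hinj : ∀ U V : Submodule A N, U ≤ b → V ≤ b →
          (Submodule.comap b.subtype U = Submodule.comap b.subtype V ↔ U = V) := by
        intro U V hU hV
        constructor
        · intro h
          have := congrArg (Submodule.map b.subtype) h
          rwa [Submodule.map_comap_subtype, Submodule.map_comap_subtype,
            inf_eq_right.mpr hU, inf_eq_right.mpr hV] at this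
        · intro h; rw [h]
      have hle := ih ↥b (fun i => Submodule.comap b.subtype (s i.castSucc))
        (fun a c hac => Submodule.comap_mono (hmono (by simpa using hac)))
        (by show Submodule.comap b.subtype (s (0 : Fin (k+1)).castSucc) = ⊥
            rw [show ((0 : Fin (k+1)).castSucc) = (0 : Fin (k+2)) from rfl, h0,
              Submodule.comap_bot, Submodule.ker_subtype])
        (by show Submodule.comap b.subtype (s (Fin.last k).castSucc) = ⊤
            rw [← hb, Submodule.comap_subtype_self])
        (fun j => by
          rcases hs j.castSucc with h | h
          · exact Or.inl (by show Submodule.comap _ _ = Submodule.comap _ _; rw [h]; rfl)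
          · exact Or.inr (comap_subtype_covby (hleb j.castSucc)
              (by show s j.succ.castSucc ≤ b; exact hleb j.succ) h))
      have hcards : (Finset.univ.filter
            (fun j : Fin k =>
              Submodule.comap b.subtype (s j.castSucc.castSucc) ≠
              Submodule.comap b.subtype (s j.succ.castSucc))).card
          = (Finset.univ.filter
            (fun j : Fin k => s j.castSucc.castSucc ≠ s j.succ.castSucc)).card := by
        congr 1
        apply Finset.filter_congr
        intro j _
        exact not_congr (hinj _ _ (hleb j.castSucc) (hleb j.succ))
      rw [hsplit, if_pos (by simpa using hcov.1.ne)]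
      refine hstep1.trans ?_
      rw [Nat.cast_add, Nat.cast_one]
      refine add_le_add_left ?_ 1
      rw [← hcards]
      exact hle


section Alg
variable {R : Type*} [CommRing R] {M : Type*} [AddCommGroup M] [Module R M]
variable (Q : Ideal R) [Q.IsPrime]

local notation "A" => Localization.AtPrime Q
local notation "ff" => LocalizedModule.mkLinearMap Q.primeCompl M

/-- quotient map helper facts -/
lemma pi_facts {P : Ideal R} {C D : Submodule R M}
    (e : (↥D ⧸ Submodule.comap D.subtype C) ≃ₗ[R] R ⧸ P) :
    ∃ π : (∀ m : M, m ∈ D → R ⧸ P),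
      (∀ m hm, π m hm = 0 ↔ m ∈ C) ∧
      (∀ (a : R) m hm ham, π (a • m) ham = a • π m hm) ∧
      (∀ m₁ m₂ hm₁ hm₂ hsub, π (m₁ - m₂) hsub = π m₁ hm₁ - π m₂ hm₂) := by
  refine ⟨fun m hm => e (Submodule.Quotient.mk ⟨m, hm⟩), fun m hm => ?_, ?_, ?_⟩
  · show e (Submodule.Quotient.mk (⟨m, hm⟩ : ↥D)) = 0 ↔ m ∈ C
    rw [LinearEquiv.map_eq_zero_iff, Submodule.Quotient.mk_eq_zero]
    exact Iff.rfl
  · intro a m hm ham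
    show e (Submodule.Quotient.mk (⟨a • m, ham⟩ : ↥D)) =
      a • e (Submodule.Quotient.mk (⟨m, hm⟩ : ↥D))
    have h1 : (⟨a • m, ham⟩ : ↥D) = a • (⟨m, hm⟩ : ↥D) := rfl
    rw [h1, Submodule.Quotient.mk_smul, map_smul]
  · intro m₁ m₂ hm₁ hm₂ hsub
    show e (Submodule.Quotient.mk (⟨m₁ - m₂, hsub⟩ : ↥D)) =
      e (Submodule.Quotient.mk (⟨m₁, hm₁⟩ : ↥D)) - e (Submodule.Quotient.mk (⟨m₂, hm₂⟩ : ↥D))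
    have h1 : (⟨m₁ - m₂, hsub⟩ : ↥D) = (⟨m₁, hm₁⟩ : ↥D) - ⟨m₂, hm₂⟩ := rfl
    rw [h1, Submodule.Quotient.mk_sub, map_sub]

/-- Case `P ≠ Q`: the localized step collapses on `Q`-power-torsion elements. -/
lemma loc_step_eq {P : Ideal R} [hP : P.IsPrime] (hPQ : P ≠ Q)
    {C D : Submodule R M} (hCD : C ≤ D)
    (e : (↥D ⧸ Submodule.comap D.subtype C) ≃ₗ[R] R ⧸ P)
    (x : LocalizedModule Q.primeCompl M)
    (hx : x ∈ D.localized' A Q.primeCompl ff)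
    (htor : ∃ n : ℕ, ∀ q ∈ Q, (q ^ n : R) • x = 0) :
    x ∈ C.localized' A Q.primeCompl ff := by
  obtain ⟨π, hπ0, hπsmul, hπsub⟩ := pi_facts (P := P) (C := C) (D := D) e
  obtain ⟨m, hm, u, rfl⟩ := hx
  by_cases hPle : P ≤ Q
  · -- P ⊊ Q : use torsion
    have hQP : ¬ Q ≤ P := fun h => hPQ (le_antisymm hPle h)
    obtain ⟨q, hqQ, hqP⟩ := SetLike.not_le_iff_exists.mp hQP
    obtain ⟨n, hn⟩ := htor
    have h0 : (q ^ n : R) • IsLocalizedModule.mk' ff m u = 0 := hn q hqQ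
    rw [← IsLocalizedModule.mk'_smul] at h0
    obtain ⟨s, hs⟩ := (IsLocalizedModule.mk'_eq_zero' ff u).mp h0
    have hmem : ((s : R) * q ^ n) • m ∈ C := by
      rw [mul_smul]
      rw [Submonoid.smul_def] at hs
      rw [hs]
      exact C.zero_mem
    have hpim : π m hm = 0 := by
      obtain ⟨r₁, hr₁⟩ := Ideal.Quotient.mk_surjective (I := P) (π m hm)
      have h1 : π (((s : R) * q ^ n) • m) (D.smul_mem _ hm) = 0 := (hπ0 _ _).mpr hmem
      rw [hπsmul _ _ hm] at h1
      rw [← hr₁] at h1 ⊢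
      have h2 : ((s : R) * q ^ n) • (Ideal.Quotient.mk P r₁ : R ⧸ P)
          = Ideal.Quotient.mk P ((s : R) * q ^ n * r₁) := by
        rw [← Ideal.Quotient.mk_eq_mk, ← Ideal.Quotient.mk_eq_mk,
          ← Submodule.Quotient.mk_smul]
        rfl
      rw [h2] at h1
      have h3 : ((s : R) * q ^ n * r₁) ∈ P := by
        rwa [← Ideal.Quotient.mk_eq_mk, Submodule.Quotient.mk_eq_zero] at h1
      have hsP : (s : R) ∉ P := fun h => s.2 (hPle h)
      have hqnP : (q ^ n : R) ∉ P := fun h => hqP (hP.mem_of_pow_mem n h)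
      have : r₁ ∈ P := by
        rcases hP.mem_or_mem h3 with h | h
        · rcases hP.mem_or_mem h with h | h
          · exact absurd h hsP
          · exact absurd h hqnP
        · exact h
      rwa [← Ideal.Quotient.mk_eq_mk, Submodule.Quotient.mk_eq_zero]
    exact ⟨m, (hπ0 m hm).mp hpim, u, rfl⟩
  · -- P ⊄ Q : the step already collapses after localization
    obtain ⟨t, htP, htQ⟩ := SetLike.not_le_iff_exists.mp hPle
    have hmem : (t : R) • m ∈ C := by
      refine (hπ0 _ (D.smul_mem _ hm)).mp ?_
      rw [hπsmul _ _ hm]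
      obtain ⟨r₁, hr₁⟩ := Ideal.Quotient.mk_surjective (I := P) (π m hm)
      rw [← hr₁]
      have h2 : (t : R) • (Ideal.Quotient.mk P r₁ : R ⧸ P)
          = Ideal.Quotient.mk P (t * r₁) := by
        rw [← Ideal.Quotient.mk_eq_mk, ← Ideal.Quotient.mk_eq_mk,
          ← Submodule.Quotient.mk_smul]
        rfl
      rw [h2, ← Ideal.Quotient.mk_eq_mk, Submodule.Quotient.mk_eq_zero]
      exact P.mul_mem_right _ htP
    refine ⟨t • m, hmem, (⟨t, htQ⟩ : Q.primeCompl) * u, ?_⟩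
    rw [show (t : R) • m = (⟨t, htQ⟩ : Q.primeCompl) • m from rfl]
    exact IsLocalizedModule.mk'_cancel_left ff m _ u

/-- Case `Q ≤ P` (in practice `P = Q`): the step quotient is one-dimensional. -/
lemma loc_step_cov {P : Ideal R} (hQP : Q ≤ P)
    {C D : Submodule R M} (hCD : C ≤ D)
    (e : (↥D ⧸ Submodule.comap D.subtype C) ≃ₗ[R] R ⧸ P)
    (x y : LocalizedModule Q.primeCompl M)
    (hx : x ∈ D.localized' A Q.primeCompl ff)
    (hy : y ∈ D.localized' A Q.primeCompl ff)
    (hyC : y ∉ C.localized' A Q.primeCompl ff) :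
    ∃ a : A, x - a • y ∈ C.localized' A Q.primeCompl ff := by
  obtain ⟨π, hπ0, hπsmul, hπsub⟩ := pi_facts (P := P) (C := C) (D := D) e
  obtain ⟨m₁, hm₁, u₁, rfl⟩ := hx
  obtain ⟨m₂, hm₂, u₂, rfl⟩ := hy
  obtain ⟨r₁, hr₁⟩ := Ideal.Quotient.mk_surjective (I := P) (π m₁ hm₁)
  obtain ⟨r₂, hr₂⟩ := Ideal.Quotient.mk_surjective (I := P) (π m₂ hm₂)
  have hm₂C : m₂ ∉ C := fun h => hyC ⟨m₂, h, u₂, rfl⟩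
  have hr₂P : r₂ ∉ P := by
    intro h
    refine hm₂C ((hπ0 m₂ hm₂).mp ?_)
    rw [← hr₂, ← Ideal.Quotient.mk_eq_mk, Submodule.Quotient.mk_eq_zero]
    exact h
  have hr₂Q : r₂ ∈ Q.primeCompl := fun h => hr₂P (hQP h)
  refine ⟨IsLocalization.mk' (Localization.AtPrime Q) (r₁ * (u₂ : R))
    ((⟨r₂, hr₂Q⟩ : Q.primeCompl) * u₁), ?_⟩
  rw [IsLocalizedModule.mk'_smul_mk' (Localization.AtPrime Q)]
  rw [IsLocalizedModule.mk'_sub_mk']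
  refine ⟨_, ?_, _, rfl⟩
  -- numerator membership
  have hmem : ((⟨r₂, hr₂Q⟩ * u₁ * u₂ : Q.primeCompl) : R) • m₁
      - (u₁ : R) • ((r₁ * (u₂ : R)) • m₂) ∈ C := by
    refine (hπ0 _ (Submodule.sub_mem _ (D.smul_mem _ hm₁) (D.smul_mem _ (D.smul_mem _ hm₂)))).mp ?_
    rw [hπsub _ _ (D.smul_mem _ hm₁) (D.smul_mem _ (D.smul_mem _ hm₂)),
      hπsmul _ _ hm₁, hπsmul _ _ (D.smul_mem _ hm₂), hπsmul _ _ hm₂, ← hr₁, ← hr₂]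
    have hmk : ∀ (a b : R), a • (Ideal.Quotient.mk P b : R ⧸ P)
        = Ideal.Quotient.mk P (a * b) := by
      intro a b
      rw [← Ideal.Quotient.mk_eq_mk, ← Ideal.Quotient.mk_eq_mk, ← Submodule.Quotient.mk_smul]
      rfl
    rw [hmk, hmk, hmk, ← map_sub, ← Ideal.Quotient.mk_eq_mk,
      Submodule.Quotient.mk_eq_zero]
    have : (((⟨r₂, hr₂Q⟩ * u₁ * u₂ : Q.primeCompl) : R)) * r₁ - (u₁ : R) * (r₁ * (u₂ : R) * r₂)
        = 0 := by
      push_cast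
      ring
    rw [this]
    exact P.zero_mem
  exact hmem

end Alg

/-- Let `R` be Noetherian, `M` a finitely generated
`R`-module with a prime filtration `0 = M₀ ⊂ M₁ ⊂ ⋯ ⊂ M_r = M`,
`Mᵢ/Mᵢ₋₁ ≅ R/Pᵢ`. Then for every prime `P`, the length multiplicity
`mult_M(P)` is at most the number of indices `i` with `Pᵢ = P`. -/
theorem lengthMult_le_card_factors
    {R : Type*} [CommRing R] [IsNoetherianRing R]
    {M : Type*} [AddCommGroup M] [Module R M] [Module.Finite R M]
    {r : ℕ} (c : Fin (r + 1) → Submodule R M)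
    (hbot : c 0 = ⊥) (htop : c (Fin.last r) = ⊤)
    (hmono : ∀ j : Fin r, c j.castSucc ≤ c j.succ)
    (P : Fin r → Ideal R) (hP : ∀ j, (P j).IsPrime)
    (hiso : ∀ j : Fin r,
      Nonempty ((↥(c j.succ) ⧸
        Submodule.comap (c j.succ).subtype (c j.castSucc)) ≃ₗ[R] R ⧸ P j))
    (Q : Ideal R) (hQ : Q.IsPrime) :
    @lengthMult R _ M _ _ Q hQ ≤ ((Nat.card {j : Fin r // P j = Q} : ℕ∞) : WithBot ℕ∞) := by
  classical
  rw [lengthMult]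
  set MM := LocalizedModule Q.primeCompl M with hMM
  set AA := Localization.AtPrime Q with hAA
  set f := LocalizedModule.mkLinearMap Q.primeCompl M with hf
  set Nsup : Submodule AA MM := ⨆ k : ℕ, Submodule.torsionBySet AA MM
      ((IsLocalRing.maximalIdeal AA ^ k : Ideal AA) : Set AA) with hNsup
  set loc : Submodule R M → Submodule AA MM :=
    fun c' => c'.localized' AA Q.primeCompl f with hloc
  set t : Fin (r+1) → Submodule AA ↥Nsup :=
    fun i => Submodule.comap Nsup.subtype (loc (c i)) with ht
  have hcmono : Monotone c := Fin.monotone_iff_le_succ.mpr hmono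
  have hlocmono : ∀ {c₁ c₂ : Submodule R M}, c₁ ≤ c₂ → loc c₁ ≤ loc c₂ := by
    rintro c₁ c₂ h x ⟨m, hm, s, rfl⟩
    exact ⟨m, h hm, s, rfl⟩
  have htmono : Monotone t :=
    fun i j hij => Submodule.comap_mono (hlocmono (hcmono hij))
  have ht0 : t 0 = ⊥ := by
    rw [ht]
    simp only [hbot, hloc]
    rw [Submodule.localized'_bot, Submodule.comap_bot, Submodule.ker_subtype]
  have htlast : t (Fin.last r) = ⊤ := by
    rw [ht]
    simp only [htop, hloc]
    rw [Submodule.localized'_top, Submodule.comap_top]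
  have htorsion : ∀ x : ↥Nsup, ∃ n : ℕ, ∀ q ∈ Q, (q ^ n : R) • (x : MM) = 0 := by
    intro x
    have hdir : Directed (· ≤ ·) (fun k : ℕ => Submodule.torsionBySet AA MM
        ((IsLocalRing.maximalIdeal AA ^ k : Ideal AA) : Set AA)) := by
      intro i j
      refine ⟨max i j, ?_, ?_⟩ <;>
        exact Submodule.torsionBySet_le_torsionBySet_of_subset
          (Ideal.pow_le_pow_right (by omega))
    have hx : (x : MM) ∈ ⨆ k : ℕ, Submodule.torsionBySet AA MM
        ((IsLocalRing.maximalIdeal AA ^ k : Ideal AA) : Set AA) := x.2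
    rw [Submodule.mem_iSup_of_directed _ hdir] at hx
    obtain ⟨n, hn⟩ := hx
    refine ⟨n, fun q hq => ?_⟩
    rw [Submodule.mem_torsionBySet_iff] at hn
    have hmem : (algebraMap R AA q) ^ n ∈ (IsLocalRing.maximalIdeal AA) ^ n :=
      Ideal.pow_mem_pow ((IsLocalization.AtPrime.to_map_mem_maximal_iff AA Q q).mpr hq) n
    have h2 : ((algebraMap R AA) q) ^ n • (x : MM) = 0 := hn ⟨(algebraMap R AA q) ^ n, hmem⟩
    rwa [← map_pow, algebraMap_smul] at h2
  have heqstep : ∀ j : Fin r, P j ≠ Q → t j.castSucc = t j.succ := by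
    intro j hne
    refine le_antisymm (htmono (Fin.castSucc_le_succ j)) ?_
    intro x hx
    haveI := hP j
    exact loc_step_eq Q hne (hmono j) (hiso j).some (x : MM) hx (htorsion x)
  have hsteps : ∀ j : Fin r, t j.castSucc = t j.succ ∨ t j.castSucc ⋖ t j.succ := by
    intro j
    rcases eq_or_ne (t j.castSucc) (t j.succ) with h | h
    · exact Or.inl h
    have hPQ : P j = Q := by
      by_contra hne
      exact h (heqstep j hne)
    refine Or.inr ⟨lt_of_le_of_ne (htmono (Fin.castSucc_le_succ j)) h, ?_⟩
    intro z hz1 hz2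
    obtain ⟨y, hyz, hyt⟩ := SetLike.exists_of_lt hz1
    have hyD : (y : MM) ∈ loc (c j.succ) := hz2.le hyz
    have hyC : (y : MM) ∉ loc (c j.castSucc) := hyt
    have hle : t j.succ ≤ z := by
      intro x hx
      obtain ⟨a, ha⟩ := loc_step_cov Q hPQ.ge (hmono j) (hiso j).some
        (x : MM) (y : MM) hx hyD hyC
      have hxz : x - a • y ∈ t j.castSucc := by
        show ((x - a • y : ↥Nsup) : MM) ∈ loc (c j.castSucc)
        rwa [Submodule.coe_sub, Submodule.coe_smul]
      have hxy : x = (x - a • y) + a • y := by abel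
      rw [hxy]
      exact z.add_mem (hz1.le hxz) (z.smul_mem a hyz)
    exact absurd (lt_of_lt_of_le hz2 hle) (lt_irrefl z)
  refine le_trans
    (krullDim_le_count_strict_steps r ↥Nsup t htmono ht0 htlast hsteps) ?_
  have hsubset : (Finset.univ.filter (fun j : Fin r => t j.castSucc ≠ t j.succ))
      ⊆ (Finset.univ.filter (fun j : Fin r => P j = Q)) := by
    intro j hj
    rw [Finset.mem_filter] at hj ⊢
    refine ⟨hj.1, ?_⟩
    by_contra hne
    exact hj.2 (heqstep j hne)
  have hcard : (Finset.univ.filter (fun j : Fin r => t j.castSucc ≠ t j.succ)).card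
      ≤ Nat.card {j : Fin r // P j = Q} := by
    rw [Nat.card_eq_fintype_card, Fintype.card_subtype]
    exact Finset.card_le_card hsubset
  exact_mod_cast hcard
end
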